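/- arXiv:0805.2219 — 6 statements merged into one kernel-verified Lean document; each statement's English description precedes it below -/
import Mathlib

section
/- For every Borel probability measure P on ℝ^d and every α ∈ (0, 1], the α-trimming P^α is a compact subset of the space of Borel probability measures on ℝ^d endowed with the topology of weak convergence. -/
open MeasureTheory Filter Topology

/-- The `α`-trimming of a Borel probability measure `P` on `ℝ^d`: the set of Borel probability
measures `Q` with `Q B ≤ α⁻¹ * P B` for every Borel set `B`. -/
def trimSet {d : ℕ} (P : ProbabilityMeasure (Fin d → ℝ)) (α : ℝ) :
    Set (ProbabilityMeasure (Fin d → ℝ)) :=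
  {Q | ∀ B : Set (Fin d → ℝ), MeasurableSet B →
    (Q : Measure (Fin d → ℝ)) B ≤ ENNReal.ofReal α⁻¹ * (P : Measure (Fin d → ℝ)) B}


namespace TrimProof

open Set ENNReal
open scoped symmDiff

variable {X : Type*} [MeasurableSpace X] (μ : Measure X) [IsFiniteMeasure μ] (c : ℝ)

/-- The `L¹(μ)` indicator function of a measurable set. -/
noncomputable def ind (B : Set X) (hB : MeasurableSet B) : Lp ℝ 1 μ :=
  indicatorConstLp 1 hB (measure_ne_top μ B) (1 : ℝ)

lemma ind_congr {B B' : Set X} (h : B = B') (hB : MeasurableSet B) (hB' : MeasurableSet B') :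
    ind μ B hB = ind μ B' hB' := by subst h; rfl

lemma ind_coeFn {B : Set X} {hB : MeasurableSet B} :
    ⇑(ind μ B hB) =ᵐ[μ] B.indicator (fun _ => (1 : ℝ)) := indicatorConstLp_coeFn

lemma ind_nonneg {B : Set X} {hB : MeasurableSet B} :
    0 ≤ᵐ[μ] ⇑(ind μ B hB) := by
  filter_upwards [ind_coeFn μ (hB := hB)] with x hx
  rw [hx]
  exact Set.indicator_nonneg (fun _ _ => zero_le_one) x

lemma ind_empty : ind μ ∅ MeasurableSet.empty = 0 := by
  rw [ind]
  exact indicatorConstLp_empty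

lemma integral_ind {B : Set X} {hB : MeasurableSet B} :
    ∫ x, (ind μ B hB) x ∂μ = (μ B).toReal := by
  rw [ind, integral_indicatorConstLp hB (measure_ne_top μ B) (1 : ℝ), smul_eq_mul, mul_one]
  rfl


variable {X : Type*} [MeasurableSpace X] (μ : Measure X) [IsFiniteMeasure μ] (c : ℝ)

/-- The set of positive normalized functionals on `L¹(μ)` dominated by `c ∫ · dμ`. -/
def S : Set (WeakDual ℝ (Lp ℝ 1 μ)) :=
  {φ | (∀ f : Lp ℝ 1 μ, 0 ≤ᵐ[μ] ⇑f → 0 ≤ φ f ∧ φ f ≤ c * ∫ x, f x ∂μ) ∧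
    φ (indicatorConstLp 1 MeasurableSet.univ (measure_ne_top μ _) (1 : ℝ)) = 1}

lemma isClosed_S : IsClosed (S μ c) := by
  have h1 : IsClosed {φ : WeakDual ℝ (Lp ℝ 1 μ) |
      ∀ f : Lp ℝ 1 μ, 0 ≤ᵐ[μ] ⇑f → 0 ≤ φ f ∧ φ f ≤ c * ∫ x, f x ∂μ} := by
    rw [Set.setOf_forall]
    refine isClosed_iInter fun f => ?_
    by_cases hf : 0 ≤ᵐ[μ] ⇑f
    · simp only [hf, forall_true_left]
      rw [Set.setOf_and]
      exact (isClosed_le continuous_const (WeakDual.eval_continuous f)).inter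
        (isClosed_le (WeakDual.eval_continuous f) continuous_const)
    · simp only [hf, false_implies, Set.setOf_true]
      exact isClosed_univ
  have h2 : IsClosed {φ : WeakDual ℝ (Lp ℝ 1 μ) |
      φ (indicatorConstLp 1 MeasurableSet.univ (measure_ne_top μ _) (1 : ℝ)) = 1} :=
    isClosed_eq (WeakDual.eval_continuous _) continuous_const
  rw [S, Set.setOf_and]
  exact h1.inter h2

variable {μ c}

lemma abs_le_of_mem_S (hc : 0 ≤ c) {φ : WeakDual ℝ (Lp ℝ 1 μ)} (hφ : φ ∈ S μ c)
    (f : Lp ℝ 1 μ) : |φ f| ≤ c * ‖f‖ := by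
  have hposnn : 0 ≤ᵐ[μ] ⇑(Lp.posPart f) := by
    filter_upwards [Lp.coeFn_posPart f] with x hx
    rw [hx]; exact le_max_right _ _
  have hnegnn : 0 ≤ᵐ[μ] ⇑(Lp.negPart f) := by
    filter_upwards [Lp.coeFn_negPart f] with x hx
    rw [hx]; exact neg_nonneg.2 (min_le_right _ 0)
  have hint : Integrable (fun x => ‖f x‖) μ := (L1.integrable_coeFn f).norm
  have hIp : ∫ x, (Lp.posPart f) x ∂μ ≤ ‖f‖ := by
    rw [L1.norm_eq_integral_norm]
    refine integral_mono_ae (L1.integrable_coeFn _) hint ?_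
    filter_upwards [Lp.coeFn_posPart f] with x hx
    rw [hx]; exact max_le (le_abs_self _) (abs_nonneg _)
  have hIn : ∫ x, (Lp.negPart f) x ∂μ ≤ ‖f‖ := by
    rw [L1.norm_eq_integral_norm]
    refine integral_mono_ae (L1.integrable_coeFn _) hint ?_
    filter_upwards [Lp.coeFn_negPart f] with x hx
    rw [hx]
    rcases le_or_gt (f x) 0 with h | h
    · rw [min_eq_left h]; exact neg_le_abs _
    · rw [min_eq_right h.le]; simp
  have h1 := hφ.1 (Lp.posPart f) hposnn
  have h2 := hφ.1 (Lp.negPart f) hnegnn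
  have hdecomp : Lp.posPart f - Lp.negPart f = f := by
    apply Lp.ext
    filter_upwards [Lp.coeFn_sub (Lp.posPart f) (Lp.negPart f), Lp.coeFn_posPart f,
      Lp.coeFn_negPart f] with x hx hp hn
    rw [hx]
    simp only [Pi.sub_apply, hp, hn]
    rcases le_or_gt (f x) 0 with h | h
    · rw [max_eq_right h, min_eq_left h]; ring
    · rw [max_eq_left h.le, min_eq_right h.le]; ring
  have hφf : φ f = φ (Lp.posPart f) - φ (Lp.negPart f) := by
    have h := map_sub φ (Lp.posPart f) (Lp.negPart f)
    rw [hdecomp] at h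
    exact h
  have hb1 : φ (Lp.posPart f) ≤ c * ‖f‖ :=
    h1.2.trans (mul_le_mul_of_nonneg_left hIp hc)
  have hb2 : φ (Lp.negPart f) ≤ c * ‖f‖ :=
    h2.2.trans (mul_le_mul_of_nonneg_left hIn hc)
  rw [hφf, abs_sub_le_iff]
  constructor <;> linarith [h1.1, h2.1]

lemma isCompact_S (hc : 0 ≤ c) : IsCompact (S μ c) := by
  refine IsCompact.of_isClosed_subset (WeakDual.isCompact_closedBall (𝕜 := ℝ) 0 c)
    (isClosed_S μ c) fun φ hφ => ?_
  simp only [Set.mem_preimage, Metric.mem_closedBall, dist_zero_right]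
  refine ContinuousLinearMap.opNorm_le_bound _ hc fun f => ?_
  rw [Real.norm_eq_abs]
  exact abs_le_of_mem_S hc hφ f


lemma hasSum_ind {B : ℕ → Set X} (hB : ∀ i, MeasurableSet (B i))
    (hd : Pairwise (Function.onFun Disjoint B)) :
    HasSum (fun i => ind μ (B i) (hB i)) (ind μ (⋃ i, B i) (MeasurableSet.iUnion hB)) := by
  have hmeas : ∀ F : Finset ℕ, MeasurableSet (⋃ i ∈ F, B i) := fun F =>
    MeasurableSet.biUnion F.countable_toSet fun i _ => hB i
  have key : ∀ F : Finset ℕ, ∑ i ∈ F, ind μ (B i) (hB i) = ind μ (⋃ i ∈ F, B i) (hmeas F) := by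
    intro F
    induction F using Finset.induction_on with
    | empty =>
      rw [Finset.sum_empty,
        ind_congr μ (show (⋃ i ∈ (∅ : Finset ℕ), B i) = ∅ by simp) (hmeas ∅) MeasurableSet.empty,
        ind_empty]
    | insert a F ha ih =>
      have hdisj : Disjoint (B a) (⋃ i ∈ F, B i) := by
        refine Set.disjoint_iUnion₂_right.2 fun i hi => hd fun h => ha ?_
        rw [h]; exact hi
      rw [Finset.sum_insert ha, ih,
        ind_congr μ (show (⋃ i ∈ insert a F, B i) = B a ∪ ⋃ i ∈ F, B i by
          simp [Set.biUnion_insert]) (hmeas _) ((hB a).union (hmeas F))]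
      rw [ind, ind, ind, indicatorConstLp_disjoint_union (hB a) (hmeas F)
        (measure_ne_top μ _) (measure_ne_top μ _) hdisj (1 : ℝ)]
  have hsub : ∀ F : Finset ℕ, (⋃ i ∈ F, B i) ⊆ ⋃ i, B i := fun F =>
    Set.iUnion₂_subset fun i _ => Set.subset_iUnion B i
  have htend : Tendsto (fun F : Finset ℕ => μ ((⋃ i ∈ F, B i) ∆ (⋃ i, B i))) atTop (𝓝 0) := by
    have h1 : ∀ F : Finset ℕ,
        μ ((⋃ i ∈ F, B i) ∆ (⋃ i, B i)) = μ (⋃ i, B i) - ∑ i ∈ F, μ (B i) := by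
      intro F
      rw [symmDiff_of_le (hsub F),
        measure_diff (hsub F) (hmeas F).nullMeasurableSet (measure_ne_top μ _),
        measure_biUnion_finset (fun i _ j _ hij => hd hij) (fun i _ => hB i)]
    have hs : HasSum (fun i => μ (B i)) (μ (⋃ i, B i)) := by
      rw [measure_iUnion hd hB]
      exact ENNReal.summable.hasSum
    have h3 : Tendsto (fun F : Finset ℕ => μ (⋃ i, B i) - ∑ i ∈ F, μ (B i)) atTop
        (𝓝 (μ (⋃ i, B i) - μ (⋃ i, B i))) :=
      ENNReal.Tendsto.sub tendsto_const_nhds hs (Or.inl (measure_ne_top μ _))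
    rw [tsub_self] at h3
    exact h3.congr fun F => (h1 F).symm
  have h2 : Tendsto (fun F : Finset ℕ => ind μ (⋃ i ∈ F, B i) (hmeas F)) atTop
      (𝓝 (ind μ (⋃ i, B i) (MeasurableSet.iUnion hB))) :=
    tendsto_indicatorConstLp_set (by norm_num) htend
  exact h2.congr fun F => (key F).symm

/-- The measure associated to a functional in `S μ c`. -/
noncomputable def Qm (φ : WeakDual ℝ (Lp ℝ 1 μ)) (hφ : φ ∈ S μ c) : Measure X :=
  Measure.ofMeasurable (fun B hB => ENNReal.ofReal (φ (ind μ B hB)))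
    (by rw [ind_empty, map_zero, ENNReal.ofReal_zero])
    (by
      intro B hB hd
      have h1 : HasSum (fun i => φ (ind μ (B i) (hB i)))
          (φ (ind μ (⋃ i, B i) (MeasurableSet.iUnion hB))) :=
        (WeakDual.toStrongDual φ).hasSum (hasSum_ind hB hd)
      have hnn : ∀ i, 0 ≤ φ (ind μ (B i) (hB i)) := fun i =>
        (hφ.1 (ind μ (B i) (hB i)) (ind_nonneg μ)).1
      rw [← h1.tsum_eq, ENNReal.ofReal_tsum_of_nonneg hnn h1.summable])

lemma Qm_apply {φ : WeakDual ℝ (Lp ℝ 1 μ)} (hφ : φ ∈ S μ c) {B : Set X}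
    (hB : MeasurableSet B) : Qm φ hφ B = ENNReal.ofReal (φ (ind μ B hB)) :=
  Measure.ofMeasurable_apply B hB

lemma Qm_prob {φ : WeakDual ℝ (Lp ℝ 1 μ)} (hφ : φ ∈ S μ c) :
    IsProbabilityMeasure (Qm φ hφ) := by
  constructor
  rw [Qm_apply hφ MeasurableSet.univ]
  have := hφ.2
  rw [ind, this, ENNReal.ofReal_one]

lemma Qm_le (hc : 0 ≤ c) {φ : WeakDual ℝ (Lp ℝ 1 μ)} (hφ : φ ∈ S μ c) :
    Qm φ hφ ≤ ENNReal.ofReal c • μ := by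
  rw [Measure.le_iff]
  intro B hB
  rw [Qm_apply hφ hB, Measure.smul_apply, smul_eq_mul]
  calc ENNReal.ofReal (φ (ind μ B hB)) ≤ ENNReal.ofReal (c * (μ B).toReal) := by
        refine ENNReal.ofReal_le_ofReal ?_
        have := (hφ.1 (ind μ B hB) (ind_nonneg μ)).2
        rwa [integral_ind μ] at this
    _ = ENNReal.ofReal c * ENNReal.ofReal ((μ B).toReal) := ENNReal.ofReal_mul hc
    _ = ENNReal.ofReal c * μ B := by rw [ENNReal.ofReal_toReal (measure_ne_top μ B)]

variable (μ c) in
/-- Integration against a measure dominated by `c • μ`, as a continuous linear functional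
on `L¹(μ)`. -/
noncomputable def intCLM (ν : Measure X) (hc : 0 ≤ c) (hle : ν ≤ ENNReal.ofReal c • μ) :
    Lp ℝ 1 μ →L[ℝ] ℝ := by
  have hac : ν ≪ μ := Measure.absolutelyContinuous_of_le_smul hle
  have hint : ∀ f : Lp ℝ 1 μ, Integrable (⇑f) ν := fun f =>
    ((L1.integrable_coeFn f).smul_measure ENNReal.ofReal_ne_top).mono_measure hle
  refine LinearMap.mkContinuous
    { toFun := fun f => ∫ x, f x ∂ν
      map_add' := ?_
      map_smul' := ?_ } c ?_
  · intro f g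
    rw [integral_congr_ae ((Lp.coeFn_add f g).filter_mono hac.ae_le)]
    exact integral_add (hint f) (hint g)
  · intro r f
    dsimp only [LinearMap.coe_mk, AddHom.coe_mk, RingHom.id_apply]
    rw [integral_congr_ae ((Lp.coeFn_smul r f).filter_mono hac.ae_le)]
    simp only [Pi.smul_apply, smul_eq_mul]
    rw [integral_const_mul]
  · intro f
    simp only [LinearMap.coe_mk, AddHom.coe_mk]
    calc ‖∫ x, f x ∂ν‖ ≤ ∫ x, ‖f x‖ ∂ν := norm_integral_le_integral_norm _
      _ ≤ ∫ x, ‖f x‖ ∂(ENNReal.ofReal c • μ) :=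
          integral_mono_measure hle (Eventually.of_forall fun x => norm_nonneg _)
            ((L1.integrable_coeFn f).norm.smul_measure ENNReal.ofReal_ne_top)
      _ = c * ∫ x, ‖f x‖ ∂μ := by
          rw [integral_smul_measure, ENNReal.toReal_ofReal hc, smul_eq_mul]
      _ = c * ‖f‖ := by rw [← L1.norm_eq_integral_norm]

omit [IsFiniteMeasure μ] in
lemma intCLM_apply {ν : Measure X} {hc : 0 ≤ c} {hle : ν ≤ ENNReal.ofReal c • μ}
    (f : Lp ℝ 1 μ) : intCLM μ c ν hc hle f = ∫ x, f x ∂ν := rfl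

lemma phi_eq (hc : 0 ≤ c) {φ : WeakDual ℝ (Lp ℝ 1 μ)} (hφ : φ ∈ S μ c) (f : Lp ℝ 1 μ) :
    φ f = ∫ x, f x ∂(Qm φ hφ) := by
  have hle := Qm_le hc hφ
  have hac : Qm φ hφ ≪ μ := Measure.absolutelyContinuous_of_le_smul hle
  have hint : ∀ g : Lp ℝ 1 μ, Integrable (⇑g) (Qm φ hφ) := fun g =>
    ((L1.integrable_coeFn g).smul_measure ENNReal.ofReal_ne_top).mono_measure hle
  set φ' : Lp ℝ 1 μ →L[ℝ] ℝ := WeakDual.toStrongDual φ with hφ'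
  set ψ : Lp ℝ 1 μ →L[ℝ] ℝ := intCLM μ c (Qm φ hφ) hc hle with hψ
  suffices h : ∀ g : Lp ℝ 1 μ, φ' g = ψ g by
    have := h f
    rw [intCLM_apply] at this
    exact this
  refine Lp.induction (p := 1) one_ne_top (fun g : Lp ℝ 1 μ => φ' g = ψ g) ?_ ?_ ?_
  · intro r s hs hμs
    rw [Lp.simpleFunc.coe_indicatorConst]
    have hsm : (indicatorConstLp 1 hs hμs.ne r : Lp ℝ 1 μ) = r • ind μ s hs := by
      apply Lp.ext
      filter_upwards [indicatorConstLp_coeFn (p := (1 : ℝ≥0∞)) (hs := hs) (hμs := hμs.ne)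
          (c := r), Lp.coeFn_smul r (ind μ s hs), ind_coeFn μ (hB := hs)] with x h1 h2 h3
      rw [h1, h2]
      simp only [Pi.smul_apply, h3, smul_eq_mul]
      by_cases hx : x ∈ s <;> simp [Set.indicator, hx]
    rw [hsm, _root_.map_smul, _root_.map_smul]
    congr 1
    have h1 : ψ (ind μ s hs) = (Qm φ hφ s).toReal := by
      rw [hψ, intCLM_apply]
      rw [integral_congr_ae ((ind_coeFn μ (hB := hs)).filter_mono hac.ae_le)]
      rw [integral_indicator_const (1 : ℝ) hs]
      simp
      rfl
    rw [h1, Qm_apply hφ hs, ENNReal.toReal_ofReal (hφ.1 (ind μ s hs) (ind_nonneg μ)).1]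
    rfl
  · intro g h hg hh hdisj IHg IHh
    rw [map_add, map_add, IHg, IHh]
  · exact isClosed_eq φ'.continuous ψ.continuous

end TrimProof

theorem isCompact_trimSet' {d : ℕ} (P : ProbabilityMeasure (Fin d → ℝ))
    (α : ℝ) (hα : α ∈ Set.Ioc (0 : ℝ) 1) :
    IsCompact {Q : ProbabilityMeasure (Fin d → ℝ) | ∀ B : Set (Fin d → ℝ), MeasurableSet B →
      (Q : Measure (Fin d → ℝ)) B ≤ ENNReal.ofReal α⁻¹ * (P : Measure (Fin d → ℝ)) B} := by
  classical
  obtain ⟨hα0, _⟩ := hα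
  set c : ℝ := α⁻¹ with hc_def
  have hc : 0 ≤ c := inv_nonneg.2 hα0.le
  set μ : Measure (Fin d → ℝ) := (P : Measure (Fin d → ℝ)) with hμ_def
  haveI : IsProbabilityMeasure μ := P.2
  let Φ : WeakDual ℝ (Lp ℝ 1 μ) → ProbabilityMeasure (Fin d → ℝ) := fun φ =>
    if hφ : φ ∈ TrimProof.S μ c then ⟨TrimProof.Qm φ hφ, TrimProof.Qm_prob hφ⟩
    else ⟨Measure.dirac (fun _ => (0 : ℝ)), by infer_instance⟩
  have hΦcoe : ∀ φ (hφ : φ ∈ TrimProof.S μ c),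
      (Φ φ : Measure (Fin d → ℝ)) = TrimProof.Qm φ hφ := by
    intro φ hφ; simp only [Φ, dif_pos hφ]; exact congrArg Subtype.val (dif_pos hφ)
  have himg : {Q : ProbabilityMeasure (Fin d → ℝ) | ∀ B : Set (Fin d → ℝ), MeasurableSet B →
      (Q : Measure (Fin d → ℝ)) B ≤ ENNReal.ofReal α⁻¹ * (P : Measure (Fin d → ℝ)) B}
      = Φ '' TrimProof.S μ c := by
    apply Set.Subset.antisymm
    · intro Q hQ
      have hleQ : (Q : Measure (Fin d → ℝ)) ≤ ENNReal.ofReal c • μ := by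
        rw [Measure.le_iff]; intro B hB
        rw [Measure.smul_apply, smul_eq_mul]; exact hQ B hB
      haveI : IsProbabilityMeasure (Q : Measure (Fin d → ℝ)) := Q.2
      have hacQ : (Q : Measure (Fin d → ℝ)) ≪ μ :=
        Measure.absolutelyContinuous_of_le_smul hleQ
      set φQ : WeakDual ℝ (Lp ℝ 1 μ) :=
        StrongDual.toWeakDual
          (TrimProof.intCLM μ c (Q : Measure (Fin d → ℝ)) hc hleQ) with hφQ
      have happ : ∀ f : Lp ℝ 1 μ, φQ f = ∫ x, f x ∂(Q : Measure (Fin d → ℝ)) := fun f => rfl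
      have hmem : φQ ∈ TrimProof.S μ c := by
        constructor
        · intro f hf
          constructor
          · rw [happ]
            exact integral_nonneg_of_ae (hf.filter_mono hacQ.ae_le)
          · rw [happ]
            calc ∫ x, f x ∂(Q : Measure (Fin d → ℝ))
                ≤ ∫ x, f x ∂(ENNReal.ofReal c • μ) :=
                  integral_mono_measure hleQ
                    (hf.filter_mono Measure.smul_absolutelyContinuous.ae_le)
                    ((L1.integrable_coeFn f).smul_measure ENNReal.ofReal_ne_top)
              _ = c * ∫ x, f x ∂μ := by
                  rw [integral_smul_measure, ENNReal.toReal_ofReal hc, smul_eq_mul]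
        · rw [show (indicatorConstLp 1 MeasurableSet.univ (measure_ne_top μ _) (1 : ℝ))
              = TrimProof.ind μ Set.univ MeasurableSet.univ from rfl, happ]
          rw [integral_congr_ae
            ((TrimProof.ind_coeFn μ (hB := MeasurableSet.univ)).filter_mono hacQ.ae_le)]
          simp [Set.indicator_univ]
      refine ⟨φQ, hmem, Subtype.ext ?_⟩
      show (Φ φQ : Measure (Fin d → ℝ)) = (Q : Measure (Fin d → ℝ))
      rw [hΦcoe φQ hmem]
      refine Measure.ext fun B hB => ?_
      rw [TrimProof.Qm_apply hmem hB, happ]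
      rw [integral_congr_ae ((TrimProof.ind_coeFn μ (hB := hB)).filter_mono hacQ.ae_le),
        integral_indicator_const (1 : ℝ) hB]
      simp only [smul_eq_mul, mul_one, measureReal_def]
      rw [ENNReal.ofReal_toReal (measure_ne_top _ B)]
    · rintro _ ⟨φ, hφ, rfl⟩
      intro B hB
      have h := Measure.le_iff.1 (TrimProof.Qm_le hc hφ) B hB
      rw [Measure.smul_apply, smul_eq_mul] at h
      rw [hΦcoe φ hφ]
      exact h
  rw [himg]
  refine (TrimProof.isCompact_S hc).image_of_continuousOn ?_
  intro φ0 hφ0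
  apply ProbabilityMeasure.tendsto_iff_forall_integral_tendsto.2
  intro f
  have hf1 : Integrable f μ := f.integrable μ
  set fE : Lp ℝ 1 μ := hf1.toL1 f with hfE
  have key : ∀ φ (hφ : φ ∈ TrimProof.S μ c),
      ∫ x, f x ∂((Φ φ) : Measure (Fin d → ℝ)) = φ fE := by
    intro φ hφ
    rw [hΦcoe φ hφ, TrimProof.phi_eq hc hφ fE]
    exact integral_congr_ae ((hf1.coeFn_toL1.filter_mono
      (Measure.absolutelyContinuous_of_le_smul (TrimProof.Qm_le hc hφ)).ae_le).symm)
  have h2 : Tendsto (fun φ : WeakDual ℝ (Lp ℝ 1 μ) => φ fE) (𝓝[TrimProof.S μ c] φ0)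
      (𝓝 (φ0 fE)) :=
    ((WeakDual.eval_continuous fE).tendsto φ0).mono_left nhdsWithin_le_nhds
  rw [key φ0 hφ0]
  exact Tendsto.congr' (eventually_nhdsWithin_of_forall fun φ hφ => (key φ hφ).symm) h2

/-- For every Borel probability measure `P` on `ℝ^d` and every `α ∈ (0,1]`, the `α`-trimming
`P^α` is compact in the space of Borel probability measures on `ℝ^d` endowed with the topology
of weak convergence. -/
theorem isCompact_trimSet {d : ℕ} (P : ProbabilityMeasure (Fin d → ℝ))
    (α : ℝ) (hα : α ∈ Set.Ioc (0 : ℝ) 1) :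
    IsCompact (trimSet P α) :=
  isCompact_trimSet' P α hα
end

section
/- Let {X_i}_{i≥1} be a sequence of independent, identically distributed random vectors in ℝ^d with common distribution P, let P_n denote the empirical probability measure of X_1, …, X_n, let α ∈ (0, 1] and let Q ∈ P^α. Then almost surely there exists a strictly increasing sequence of indices {n_k}_k and probability measures Q_{n_k} ∈ P_{n_k}^α for all k such that Q_{n_k} converges weakly to Q as k → ∞. -/
open MeasureTheory ProbabilityTheory Filter Topology
open scoped NNReal ENNReal

/-- Strong law of large numbers specialized to bounded measurable functions of an i.i.d.
sequence with common distribution `P`. -/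
private lemma slln_aux {d : ℕ} {Ω : Type*} [MeasurableSpace Ω]
    (μ : Measure Ω) [IsProbabilityMeasure μ]
    (P : ProbabilityMeasure (Fin d → ℝ))
    (X : ℕ → Ω → (Fin d → ℝ))
    (hmeas : ∀ i, Measurable (X i))
    (hindep : iIndepFun X μ)
    (hdist : ∀ i, μ.map (X i) = (P : Measure (Fin d → ℝ)))
    (g : (Fin d → ℝ) → ℝ) (hg : Measurable g) (C : ℝ) (hC : ∀ x, |g x| ≤ C) :
    ∀ᵐ ω ∂μ, Filter.Tendsto (fun n : ℕ => (∑ i ∈ Finset.range n, g (X i ω)) / n) atTop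
      (𝓝 (∫ x, g x ∂(P : Measure (Fin d → ℝ)))) := by
  have hintP : Integrable g (P : Measure (Fin d → ℝ)) := by
    refine Integrable.mono' (integrable_const C) hg.aestronglyMeasurable
      (Filter.Eventually.of_forall fun x => ?_)
    simpa using hC x
  have hasm : ∀ i : ℕ, AEStronglyMeasurable g (μ.map (X i)) := by
    intro i; rw [hdist i]; exact hg.aestronglyMeasurable
  have hint : Integrable (fun ω => g (X 0 ω)) μ := by
    have h := integrable_map_measure (hasm 0) (hmeas 0).aemeasurable
    rw [hdist 0] at h
    exact h.mp hintP
  have key := strong_law_ae (μ := μ) (X := fun i ω => g (X i ω)) hint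
    (fun i j hij => (hindep.indepFun hij).comp hg hg)
    (fun i => (⟨(hmeas i).aemeasurable, (hmeas 0).aemeasurable,
        by rw [hdist i, hdist 0]⟩ : IdentDistrib (X i) (X 0) μ μ).comp hg)
  have hmean : (μ[fun ω => g (X 0 ω)]) = ∫ x, g x ∂(P : Measure (Fin d → ℝ)) := by
    rw [← hdist 0]
    exact (integral_map (hmeas 0).aemeasurable (hasm 0)).symm
  rw [hmean] at key
  filter_upwards [key] with ω hω
  have : (fun n : ℕ => (∑ i ∈ Finset.range n, g (X i ω)) / n)
      = fun n : ℕ => (n : ℝ)⁻¹ • ∑ i ∈ Finset.range n, g (X i ω) := by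
    funext n; rw [smul_eq_mul, div_eq_inv_mul]
  rw [this]
  exact hω

private lemma pm_fin {γ : Type*} [MeasurableSpace γ] (ρ : ProbabilityMeasure γ) :
    IsFiniteMeasure (ρ : Measure γ) := inferInstance

private lemma cont_fold {E : Type*} [TopologicalSpace E] {ι : Type*}
    (g : ι → E → ℝ) (hg : ∀ p, Continuous (g p)) (F : Finset ι) :
    Continuous fun x => Finset.fold max (0 : ℝ) (fun p => g p x) F := by
  classical
  induction F using Finset.induction_on with
  | empty => simpa using continuous_const
  | @insert a s ha ih =>
    have : (fun x => Finset.fold max (0 : ℝ) (fun p => g p x) (insert a s))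
        = fun x => max (g a x) (Finset.fold max (0 : ℝ) (fun p => g p x) s) := by
      funext x; rw [Finset.fold_insert ha]
    rw [this]
    exact (hg a).max ih

set_option maxHeartbeats 3200000 in
/-- Let `X₁, X₂, …` be i.i.d. random vectors in `ℝ^d` with common distribution `P`, let `Pₙ`
be the empirical measure of `X₁, …, Xₙ`, let `α ∈ (0,1]` and let `Q ∈ P^α`. Then almost surely
there are a strictly increasing sequence of indices `{n_k}` and probability measures
`Q_{n_k} ∈ P_{n_k}^α` with `Q_{n_k} → Q` weakly. Here `X i` denotes `X_{i+1}` and the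
empirical measures are described by the hypothesis `hPn`. -/
theorem mem_limsup_trimmed_empirical {d : ℕ} {Ω : Type*} [MeasurableSpace Ω]
    (μ : Measure Ω) [IsProbabilityMeasure μ]
    (P : ProbabilityMeasure (Fin d → ℝ))
    (X : ℕ → Ω → (Fin d → ℝ))
    (hmeas : ∀ i, Measurable (X i))
    (hindep : iIndepFun X μ)
    (hdist : ∀ i, μ.map (X i) = (P : Measure (Fin d → ℝ)))
    (Pn : Ω → ℕ → ProbabilityMeasure (Fin d → ℝ))
    (hPn : ∀ ω : Ω, ∀ n : ℕ, 1 ≤ n → ∀ B : Set (Fin d → ℝ), MeasurableSet B →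
      ((Pn ω n : Measure (Fin d → ℝ)) B).toReal
        = (∑ i ∈ Finset.range n, Set.indicator B (fun _ => (1 : ℝ)) (X i ω)) / n)
    (α : ℝ) (hα : α ∈ Set.Ioc (0 : ℝ) 1)
    (Q : ProbabilityMeasure (Fin d → ℝ)) (hQ : Q ∈ trimSet P α) :
    ∀ᵐ ω ∂μ, ∃ (ns : ℕ → ℕ) (Qk : ℕ → ProbabilityMeasure (Fin d → ℝ)),
      StrictMono ns ∧ 1 ≤ ns 0 ∧
      (∀ k, Qk k ∈ trimSet (Pn ω (ns k)) α) ∧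
      Tendsto Qk atTop (nhds Q) := by
  classical
  haveI := pm_fin P
  haveI := pm_fin Q
  haveI : (Q : Measure (Fin d → ℝ)).HaveLebesgueDecomposition P :=
    Measure.haveLebesgueDecomposition_of_sigmaFinite _ _
  obtain ⟨hα0, hα1⟩ := hα
  have hαinv1 : (1 : ℝ) ≤ α⁻¹ := (one_le_inv₀ hα0).mpr hα1
  have hαinv0 : (0 : ℝ) < α⁻¹ := inv_pos.mpr hα0
  -- absolute continuity
  have hQP : (Q : Measure (Fin d → ℝ)) ≪ (P : Measure (Fin d → ℝ)) := by
    refine Measure.AbsolutelyContinuous.mk fun B hB hB0 => ?_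
    have h := hQ B hB
    rw [hB0, mul_zero] at h
    exact le_antisymm h zero_le
  -- the Radon–Nikodym derivative is bounded by `α⁻¹`
  set r : ℝ≥0 := ⟨α⁻¹, hαinv0.le⟩ with hrdef
  have hr0 : r ≠ 0 := by
    intro h
    have : (r : ℝ) = 0 := by rw [h]; simp
    exact hαinv0.ne' this
  have hrc : (ENNReal.ofReal α⁻¹) = (r : ℝ≥0∞) := by
    rw [ENNReal.ofReal]; congr 1
    exact Real.toNNReal_of_nonneg hαinv0.le
  have hQle : (Q : Measure (Fin d → ℝ)) ≤ r • (P : Measure (Fin d → ℝ)) := by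
    refine Measure.le_iff.mpr fun B hB => ?_
    have := hQ B hB
    rwa [hrc] at this
  set f0 : (Fin d → ℝ) → ℝ≥0∞ :=
    (Q : Measure (Fin d → ℝ)).rnDeriv (P : Measure (Fin d → ℝ)) with hf0def
  have hf0le : ∀ᵐ x ∂(P : Measure (Fin d → ℝ)), f0 x ≤ (r : ℝ≥0∞) := by
    have h1 := Measure.rnDeriv_le_one_of_le hQle
    have h1' : ∀ᵐ x ∂(P : Measure (Fin d → ℝ)),
        (Q : Measure (Fin d → ℝ)).rnDeriv (r • (P : Measure (Fin d → ℝ))) x ≤ 1 :=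
      (Measure.ae_smul_measure_iff hr0).mp h1
    have h2 := Measure.rnDeriv_smul_right (Q : Measure (Fin d → ℝ))
      (P : Measure (Fin d → ℝ)) (hr := hr0)
    filter_upwards [h1', h2] with x hx1 hx2
    rw [hx2] at hx1
    have hx1' : (r : ℝ≥0∞)⁻¹ * f0 x ≤ 1 := by
      have : (r⁻¹ • (Q : Measure (Fin d → ℝ)).rnDeriv (P : Measure (Fin d → ℝ))) x
          = (r : ℝ≥0∞)⁻¹ * f0 x := by
        simp only [Pi.smul_apply, ENNReal.smul_def, smul_eq_mul, ENNReal.coe_inv hr0]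
        rfl
      rwa [this] at hx1
    calc f0 x = (r : ℝ≥0∞) * ((r : ℝ≥0∞)⁻¹ * f0 x) := by
          rw [← mul_assoc, ENNReal.mul_inv_cancel (by exact_mod_cast hr0) ENNReal.coe_ne_top,
            one_mul]
      _ ≤ (r : ℝ≥0∞) * 1 := mul_le_mul_right hx1' _
      _ = (r : ℝ≥0∞) := mul_one _
  -- the density
  set f : (Fin d → ℝ) → ℝ := fun x => min ((f0 x).toReal) α⁻¹ with hfdef
  have hfmeas : Measurable f :=
    ((Measure.measurable_rnDeriv _ _).ennreal_toReal).min measurable_const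
  have hf_nonneg : ∀ x, 0 ≤ f x := fun x => le_min ENNReal.toReal_nonneg hαinv0.le
  have hf_le : ∀ x, f x ≤ α⁻¹ := fun x => min_le_right _ _
  have hf_eq : (fun x => (f0 x).toReal) =ᵐ[(P : Measure (Fin d → ℝ))] f := by
    filter_upwards [hf0le] with x hx
    have hle : (f0 x).toReal ≤ α⁻¹ := by
      have := ENNReal.toReal_mono ENNReal.coe_ne_top hx
      rw [ENNReal.coe_toReal] at this
      exact this
    simp [hfdef, min_eq_left hle]
  have hfint1 : ∫ x, f x ∂(P : Measure (Fin d → ℝ)) = 1 := by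
    rw [← integral_congr_ae hf_eq, Measure.integral_toReal_rnDeriv hQP]
    simp
  have hfint : Integrable f (P : Measure (Fin d → ℝ)) := by
    refine Integrable.mono' (integrable_const α⁻¹) hfmeas.aestronglyMeasurable
      (Filter.Eventually.of_forall fun x => ?_)
    rw [Real.norm_eq_abs, abs_of_nonneg (hf_nonneg x)]
    exact hf_le x
  -- change of variables
  have hCOV : ∀ g : (Fin d → ℝ) → ℝ, Measurable g →
      ∫ x, g x ∂(Q : Measure (Fin d → ℝ)) = ∫ x, f x * g x ∂(P : Measure (Fin d → ℝ)) := by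
    intro g hg
    rw [← integral_rnDeriv_smul hQP (f := g)]
    refine integral_congr_ae ?_
    filter_upwards [hf_eq] with x hx
    rw [smul_eq_mul, hx]
  -- the countable family of test functions
  obtain ⟨S, hScount, hSdense⟩ := TopologicalSpace.exists_countable_dense (Fin d → ℝ)
  haveI := hScount.to_subtype
  set g₀ : ↥S × ℚ × ℕ → (Fin d → ℝ) → ℝ := fun p x =>
    max 0 (min 1 ((p.2.2 : ℝ) * ((p.2.1 : ℝ) - dist x (p.1 : Fin d → ℝ)))) with hg₀def
  have hg₀cont : ∀ p, Continuous (g₀ p) := fun p =>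
    continuous_const.max (continuous_const.min
      (continuous_const.mul (continuous_const.sub (continuous_id.dist continuous_const))))
  have hg₀0 : ∀ p x, 0 ≤ g₀ p x := fun p x => le_max_left _ _
  have hg₀1 : ∀ p x, g₀ p x ≤ 1 := fun p x => max_le zero_le_one (min_le_left _ _)
  have hg₀ball : ∀ p x, g₀ p x ≤
      Set.indicator (Metric.ball (p.1 : Fin d → ℝ) (p.2.1 : ℝ)) (fun _ => (1 : ℝ)) x := by
    intro p x
    by_cases hx : x ∈ Metric.ball (p.1 : Fin d → ℝ) (p.2.1 : ℝ)
    · rw [Set.indicator_of_mem hx]; exact hg₀1 p x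
    · rw [Set.indicator_of_notMem hx]
      rw [Metric.mem_ball, not_lt] at hx
      have h1 : (p.2.1 : ℝ) - dist x (p.1 : Fin d → ℝ) ≤ 0 := by linarith
      have h2 : (p.2.2 : ℝ) * ((p.2.1 : ℝ) - dist x (p.1 : Fin d → ℝ)) ≤ 0 :=
        mul_nonpos_of_nonneg_of_nonpos (Nat.cast_nonneg _) h1
      exact max_le le_rfl ((min_le_right _ _).trans h2)
  set gg : Finset (↥S × ℚ × ℕ) → (Fin d → ℝ) → ℝ :=
    fun F x => Finset.fold max 0 (fun p => g₀ p x) F with hggdef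
  have hggcont : ∀ F, Continuous (gg F) := fun F => cont_fold g₀ hg₀cont F
  have hggmeas : ∀ F, Measurable (gg F) := fun F => (hggcont F).measurable
  have hgg0 : ∀ F x, 0 ≤ gg F x := fun F x => (Finset.le_fold_max _).mpr (Or.inl le_rfl)
  have hgg1 : ∀ F x, gg F x ≤ 1 := fun F x =>
    (Finset.fold_max_le _).mpr ⟨zero_le_one, fun p _ => hg₀1 p x⟩
  -- the almost sure events
  have hEa : ∀ᵐ ω ∂μ, ∀ F : Finset (↥S × ℚ × ℕ),
      Tendsto (fun n : ℕ => (∑ i ∈ Finset.range n, gg F (X i ω)) / n) atTop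
        (𝓝 (∫ x, gg F x ∂(P : Measure (Fin d → ℝ)))) := by
    rw [ae_all_iff]
    intro F
    exact slln_aux μ P X hmeas hindep hdist (gg F) (hggmeas F) 1
      (fun x => abs_le.mpr ⟨by linarith [hgg0 F x], hgg1 F x⟩)
  have hEb : ∀ᵐ ω ∂μ, ∀ F : Finset (↥S × ℚ × ℕ),
      Tendsto (fun n : ℕ => (∑ i ∈ Finset.range n, f (X i ω) * gg F (X i ω)) / n) atTop
        (𝓝 (∫ x, f x * gg F x ∂(P : Measure (Fin d → ℝ)))) := by
    rw [ae_all_iff]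
    intro F
    refine slln_aux μ P X hmeas hindep hdist (fun x => f x * gg F x)
      (hfmeas.mul (hggmeas F)) α⁻¹ (fun x => ?_)
    rw [abs_of_nonneg (mul_nonneg (hf_nonneg x) (hgg0 F x))]
    calc f x * gg F x ≤ α⁻¹ * 1 :=
          mul_le_mul (hf_le x) (hgg1 F x) (hgg0 F x) hαinv0.le
      _ = α⁻¹ := mul_one _
  have hEc : ∀ᵐ ω ∂μ, Tendsto (fun n : ℕ => (∑ i ∈ Finset.range n, f (X i ω)) / n) atTop
      (𝓝 1) := by
    have h := slln_aux μ P X hmeas hindep hdist f hfmeas α⁻¹ (fun x => by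
      rw [abs_of_nonneg (hf_nonneg x)]; exact hf_le x)
    rw [hfint1] at h
    exact h
  have hEd : ∀ᵐ ω ∂μ, α = 1 → ∀ i, f (X i ω) = 1 := by
    by_cases hα' : α = 1
    · have hfle1 : ∀ x, f x ≤ 1 := fun x => by
        have := hf_le x; rw [hα'] at this; simpa using this
      have hfae1 : ∀ᵐ x ∂(P : Measure (Fin d → ℝ)), f x = 1 := by
        have h0 : ∫ x, ((1 : ℝ) - f x) ∂(P : Measure (Fin d → ℝ)) = 0 := by
          rw [integral_sub (integrable_const 1) hfint, hfint1]
          simp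
        have hnn : 0 ≤ᵐ[(P : Measure (Fin d → ℝ))] fun x => (1 : ℝ) - f x :=
          Filter.Eventually.of_forall fun x => by
            simp only [Pi.zero_apply]
            linarith [hfle1 x]
        have h1 := (integral_eq_zero_iff_of_nonneg_ae hnn
          ((integrable_const 1).sub hfint)).mp h0
        filter_upwards [h1] with x hx
        have : (1 : ℝ) - f x = 0 := hx
        linarith
      have hall : ∀ᵐ ω ∂μ, ∀ i, f (X i ω) = 1 := by
        rw [ae_all_iff]
        intro i
        have hmapae : ∀ᵐ x ∂(μ.map (X i)), f x = 1 := by rw [hdist i]; exact hfae1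
        exact (ae_map_iff (hmeas i).aemeasurable
          (hfmeas (measurableSet_singleton (1 : ℝ)))).mp hmapae
      filter_upwards [hall] with ω hω
      exact fun _ i => hω i
    · exact Filter.Eventually.of_forall fun ω h => absurd h hα'
  filter_upwards [hEa, hEb, hEc, hEd] with ω hA hB hC hD
  ---- pathwise construction
  set a : ℕ → ℝ := fun n => (∑ i ∈ Finset.range n, f (X i ω)) / n with hadef
  set t : ℕ → ℝ := fun n =>
    if α = 1 then (n : ℝ) / (n + 1)
    else min ((n : ℝ) / (n + 1)) ((1 - α) / (max 0 (1 - a n) + (1 - α))) with htdef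
  have hden_pos : α ≠ 1 → ∀ n : ℕ, 0 < max 0 (1 - a n) + (1 - α) := by
    intro hα' n
    have h1 : 0 < 1 - α := by
      rcases lt_or_eq_of_le hα1 with h | h
      · linarith
      · exact absurd h hα'
    have h2 : 0 ≤ max 0 (1 - a n) := le_max_left _ _
    linarith
  have hndiv : ∀ n : ℕ, 0 ≤ (n : ℝ) / (n + 1) ∧ (n : ℝ) / (n + 1) < 1 := by
    intro n
    constructor
    · positivity
    · rw [div_lt_one (by positivity)]; linarith [Nat.cast_nonneg (α := ℝ) n]
  have ht0 : ∀ n, 0 ≤ t n := by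
    intro n
    rw [htdef]
    split_ifs with h
    · exact (hndiv n).1
    · exact le_min (hndiv n).1 (div_nonneg (by linarith) (hden_pos h n).le)
  have htlt1 : ∀ n, t n < 1 := by
    intro n
    rw [htdef]
    split_ifs with h
    · exact (hndiv n).2
    · exact lt_of_le_of_lt (min_le_left _ _) (hndiv n).2
  have ha_eq_one : α = 1 → ∀ n : ℕ, 1 ≤ n → a n = 1 := by
    intro hα' n hn
    simp only [hadef]
    have : ∀ i ∈ Finset.range n, f (X i ω) = 1 := fun i _ => hD hα' i
    rw [Finset.sum_congr rfl this, Finset.sum_const, Finset.card_range, nsmul_eq_mul, mul_one,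
      div_self (by exact_mod_cast Nat.one_le_iff_ne_zero.mp hn : (n : ℝ) ≠ 0)]
  have htcond : ∀ n, 1 ≤ n → t n * (1 - a n) ≤ (1 - t n) * (1 - α) := by
    intro n hn
    by_cases hα' : α = 1
    · rw [ha_eq_one hα' n hn, hα']
      simp
    · have hd := hden_pos hα' n
      rcases le_or_gt (1 - a n) 0 with h | h
      · have h1 : t n * (1 - a n) ≤ 0 := mul_nonpos_of_nonneg_of_nonpos (ht0 n) h
        have h2 : 0 ≤ (1 - t n) * (1 - α) := by
          have := htlt1 n
          have h3 : 0 < 1 - α := by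
            rcases lt_or_eq_of_le hα1 with h' | h'
            · linarith
            · exact absurd h' hα'
          nlinarith
        linarith
      · have hmax : max 0 (1 - a n) = 1 - a n := max_eq_right h.le
        have hden : 0 < (1 - a n) + (1 - α) := by rw [hmax] at hd; exact hd
        have htle : t n ≤ (1 - α) / ((1 - a n) + (1 - α)) := by
          rw [htdef]
          simp only [if_neg hα']
          rw [hmax]
          exact min_le_right _ _
        have := (le_div_iff₀ hden).mp htle
        nlinarith
  have htlim : Tendsto t atTop (𝓝 1) := by
    have hhalf : Tendsto (fun n : ℕ => (n : ℝ) / (n + 1)) atTop (𝓝 1) :=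
      tendsto_natCast_div_add_atTop (1 : ℝ)
    rw [htdef]
    by_cases hα' : α = 1
    · simpa [hα'] using hhalf
    · have h1 : 0 < 1 - α := by
        rcases lt_or_eq_of_le hα1 with h' | h'
        · linarith
        · exact absurd h' hα'
      have hmaxlim : Tendsto (fun n => max 0 (1 - a n)) atTop (𝓝 0) := by
        have := Tendsto.max (tendsto_const_nhds (x := (0 : ℝ)))
          ((tendsto_const_nhds (x := (1 : ℝ))).sub hC)
        simpa using this
      have hsec : Tendsto (fun n => (1 - α) / (max 0 (1 - a n) + (1 - α))) atTop (𝓝 1) := by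
        have := Tendsto.div (tendsto_const_nhds (x := (1 - α : ℝ)))
          (hmaxlim.add (tendsto_const_nhds (x := (1 - α : ℝ)))) (by simpa using h1.ne')
        rw [zero_add, div_self h1.ne'] at this
        exact this
      have := hhalf.min hsec
      simpa [hα'] using this
  -- weights and total mass
  set w : ℕ → ℕ → ℝ := fun n i => t n * f (X i ω) + (1 - t n) with hwdef
  have hw0 : ∀ n i, 0 < w n i := by
    intro n i
    have h1 := ht0 n
    have h2 := htlt1 n
    have h3 := hf_nonneg (X i ω)
    have : 0 ≤ t n * f (X i ω) := mul_nonneg h1 h3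
    rw [hwdef]; dsimp only; linarith
  have hwle : ∀ n i, w n i ≤ t n * α⁻¹ + (1 - t n) := fun n i =>
    add_le_add_left (mul_le_mul_of_nonneg_left (hf_le _) (ht0 n)) _
  set D : ℕ → ℝ := fun n => ∑ i ∈ Finset.range n, w n i with hDdef
  have hD0 : ∀ n, 1 ≤ n → 0 < D n := fun n hn =>
    Finset.sum_pos (fun i _ => hw0 n i) (Finset.nonempty_range_iff.mpr (by omega))
  have hDeq : ∀ n : ℕ, 1 ≤ n → D n = n * (t n * a n + (1 - t n)) := by
    intro n hn
    have hnne : (n : ℝ) ≠ 0 := by exact_mod_cast Nat.one_le_iff_ne_zero.mp hn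
    have hsum : ∑ i ∈ Finset.range n, f (X i ω) = n * a n := by
      simp only [hadef]; field_simp
    rw [hDdef, hwdef]
    simp only
    rw [Finset.sum_add_distrib, ← Finset.mul_sum, hsum, Finset.sum_const, Finset.card_range,
      nsmul_eq_mul]
    ring
  have hkey : ∀ n : ℕ, 1 ≤ n → (t n * α⁻¹ + (1 - t n)) * n ≤ α⁻¹ * D n := by
    intro n hn
    rw [hDeq n hn]
    have hcond := htcond n hn
    have hinv : α * α⁻¹ = 1 := mul_inv_cancel₀ hα0.ne'
    have hgoal : t n * α⁻¹ + (1 - t n) ≤ α⁻¹ * (t n * a n + (1 - t n)) := by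
      have h1 : α⁻¹ * (t n * (1 - a n)) ≤ α⁻¹ * ((1 - t n) * (1 - α)) :=
        mul_le_mul_of_nonneg_left hcond hαinv0.le
      have h2 : α⁻¹ * ((1 - t n) * (1 - α)) = α⁻¹ * (1 - t n) - (1 - t n) := by
        field_simp
      rw [h2] at h1
      nlinarith [h1]
    calc (t n * α⁻¹ + (1 - t n)) * n ≤ (α⁻¹ * (t n * a n + (1 - t n))) * n :=
          mul_le_mul_of_nonneg_right hgoal (Nat.cast_nonneg n)
      _ = α⁻¹ * (n * (t n * a n + (1 - t n))) := by ring
  -- the empirical trimmed measures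
  set ν : ℕ → Measure (Fin d → ℝ) := fun n =>
    ∑ i ∈ Finset.range n, ENNReal.ofReal (w n i) • Measure.dirac (X i ω) with hνdef
  have hν_apply : ∀ n (B : Set (Fin d → ℝ)), MeasurableSet B →
      ν n B = ENNReal.ofReal
        (∑ i ∈ Finset.range n, w n i * Set.indicator B (fun _ => (1 : ℝ)) (X i ω)) := by
    intro n B hB
    rw [hνdef]
    rw [Measure.finset_sum_apply]
    rw [ENNReal.ofReal_sum_of_nonneg (fun i _ =>
      mul_nonneg (hw0 n i).le (Set.indicator_nonneg (fun _ _ => zero_le_one) _))]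
    refine Finset.sum_congr rfl fun i _ => ?_
    rw [Measure.smul_apply, smul_eq_mul, Measure.dirac_apply' _ hB]
    by_cases hx : X i ω ∈ B
    · simp [Set.indicator_of_mem hx]
    · simp [Set.indicator_of_notMem hx]
  have hνuniv : ∀ n, ν n Set.univ = ENNReal.ofReal (D n) := by
    intro n
    rw [hν_apply n _ MeasurableSet.univ, hDdef]
    simp
  set M : ℕ → Measure (Fin d → ℝ) := fun n => (ENNReal.ofReal (D n))⁻¹ • ν n with hMdef
  have hMprob : ∀ n, 1 ≤ n → IsProbabilityMeasure (M n) := by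
    intro n hn
    constructor
    rw [hMdef]
    simp only [Measure.smul_apply, smul_eq_mul]
    rw [hνuniv n, ENNReal.inv_mul_cancel (ENNReal.ofReal_pos.mpr (hD0 n hn)).ne'
      ENNReal.ofReal_ne_top]
  have hM_apply : ∀ n, 1 ≤ n → ∀ B : Set (Fin d → ℝ), MeasurableSet B →
      M n B = ENNReal.ofReal
        ((∑ i ∈ Finset.range n, w n i * Set.indicator B (fun _ => (1 : ℝ)) (X i ω)) / D n) := by
    intro n hn B hB
    rw [hMdef]
    simp only [Measure.smul_apply, smul_eq_mul]
    rw [hν_apply n B hB, div_eq_mul_inv,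
      ENNReal.ofReal_mul' (inv_nonneg.mpr (hD0 n hn).le),
      ENNReal.ofReal_inv_of_pos (hD0 n hn), mul_comm]
  set QP : ℕ → ProbabilityMeasure (Fin d → ℝ) := fun n =>
    if h : 1 ≤ n then ⟨M n, hMprob n h⟩ else Q with hQPdef
  have hQPcoe : ∀ n, 1 ≤ n → (QP n : Measure (Fin d → ℝ)) = M n := by
    intro n hn
    have hQPn : QP n = ⟨M n, hMprob n hn⟩ := dif_pos hn
    rw [hQPn]
    rfl
  -- trimming property
  have htrim : ∀ n, 1 ≤ n → QP n ∈ trimSet (Pn ω n) α := by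
    intro n hn B hB
    rw [hQPcoe n hn]
    set T : ℝ := ∑ i ∈ Finset.range n, Set.indicator B (fun _ => (1 : ℝ)) (X i ω) with hTdef
    have hT0 : 0 ≤ T :=
      Finset.sum_nonneg fun i _ => Set.indicator_nonneg (fun _ _ => zero_le_one) _
    have hS : (∑ i ∈ Finset.range n, w n i * Set.indicator B (fun _ => (1 : ℝ)) (X i ω))
        ≤ (t n * α⁻¹ + (1 - t n)) * T := by
      rw [hTdef, Finset.mul_sum]
      exact Finset.sum_le_sum fun i _ => mul_le_mul_of_nonneg_right (hwle n i)
        (Set.indicator_nonneg (fun _ _ => zero_le_one) _)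
    have hPnB : ((Pn ω n : Measure (Fin d → ℝ)) B) = ENNReal.ofReal (T / n) := by
      haveI := pm_fin (Pn ω n)
      rw [← ENNReal.ofReal_toReal (measure_ne_top (Pn ω n : Measure (Fin d → ℝ)) B),
        hPn ω n hn B hB]
    rw [hM_apply n hn B hB, hPnB, ← ENNReal.ofReal_mul hαinv0.le]
    apply ENNReal.ofReal_le_ofReal
    rw [div_le_iff₀ (hD0 n hn)]
    have hnpos : (0 : ℝ) < n := by exact_mod_cast hn
    have h2 : (T / n) * ((t n * α⁻¹ + (1 - t n)) * n) ≤ (T / n) * (α⁻¹ * D n) :=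
      mul_le_mul_of_nonneg_left (hkey n hn) (div_nonneg hT0 hnpos.le)
    have h3 : (T / n) * ((t n * α⁻¹ + (1 - t n)) * n) = (t n * α⁻¹ + (1 - t n)) * T := by
      field_simp
    calc (∑ i ∈ Finset.range n, w n i * Set.indicator B (fun _ => (1 : ℝ)) (X i ω))
        ≤ (t n * α⁻¹ + (1 - t n)) * T := hS
      _ = (T / n) * ((t n * α⁻¹ + (1 - t n)) * n) := h3.symm
      _ ≤ (T / n) * (α⁻¹ * D n) := h2
      _ = α⁻¹ * (T / n) * D n := by ring
  -- convergence of the weighted empirical integrals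
  have hq : ∀ F : Finset (↥S × ℚ × ℕ),
      Tendsto (fun n : ℕ => (∑ i ∈ Finset.range n, w n i * gg F (X i ω)) / D n) atTop
        (𝓝 (∫ x, f x * gg F x ∂(P : Measure (Fin d → ℝ)))) := by
    intro F
    have heq : ∀ n : ℕ, 1 ≤ n →
        (t n * ((∑ i ∈ Finset.range n, f (X i ω) * gg F (X i ω)) / n)
          + (1 - t n) * ((∑ i ∈ Finset.range n, gg F (X i ω)) / n))
          / (t n * a n + (1 - t n))
        = (∑ i ∈ Finset.range n, w n i * gg F (X i ω)) / D n := by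
      intro n hn
      have hnne : (n : ℝ) ≠ 0 := by exact_mod_cast Nat.one_le_iff_ne_zero.mp hn
      have hnum : ∑ i ∈ Finset.range n, w n i * gg F (X i ω)
          = t n * (∑ i ∈ Finset.range n, f (X i ω) * gg F (X i ω))
            + (1 - t n) * (∑ i ∈ Finset.range n, gg F (X i ω)) := by
        rw [hwdef]
        simp only [add_mul, Finset.sum_add_distrib, Finset.mul_sum]
        congr 1
        · exact Finset.sum_congr rfl fun i _ => by ring
      rw [hnum, hDeq n hn]
      have hDn : (n : ℝ) * (t n * a n + (1 - t n)) ≠ 0 := by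
        rw [← hDeq n hn]; exact (hD0 n hn).ne'
      have hden : t n * a n + (1 - t n) ≠ 0 := by
        intro h; apply hDn; rw [h, mul_zero]
      field_simp
    have hdenlim : Tendsto (fun n => t n * a n + (1 - t n)) atTop (𝓝 1) := by
      have := (htlim.mul hC).add ((tendsto_const_nhds (x := (1 : ℝ))).sub htlim)
      simpa using this
    have hnumlim : Tendsto (fun n : ℕ =>
        t n * ((∑ i ∈ Finset.range n, f (X i ω) * gg F (X i ω)) / n)
          + (1 - t n) * ((∑ i ∈ Finset.range n, gg F (X i ω)) / n)) atTop
        (𝓝 (∫ x, f x * gg F x ∂(P : Measure (Fin d → ℝ)))) := by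
      have h1 := (htlim.mul (hB F)).add
        (((tendsto_const_nhds (x := (1 : ℝ))).sub htlim).mul (hA F))
      have : (1 : ℝ) * (∫ x, f x * gg F x ∂(P : Measure (Fin d → ℝ)))
          + (1 - 1) * (∫ x, gg F x ∂(P : Measure (Fin d → ℝ)))
          = ∫ x, f x * gg F x ∂(P : Measure (Fin d → ℝ)) := by ring
      rwa [this] at h1
    have hlim := hnumlim.div hdenlim one_ne_zero
    rw [div_one] at hlim
    refine Tendsto.congr' ?_ hlim
    filter_upwards [eventually_ge_atTop 1] with n hn
    exact heq n hn
  ---- conclusion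
  refine ⟨fun k => k + 1, fun k => QP (k + 1), fun _ _ h => Nat.add_lt_add_right h 1, le_refl 1,
    fun k => htrim (k + 1) (by omega), ?_⟩
  apply tendsto_of_forall_isOpen_le_liminf
  intro G hG
  set 𝒜 : Set (↥S × ℚ × ℕ) := {p | ∀ x, g₀ p x ≤ Set.indicator G (fun _ => (1 : ℝ)) x}
    with h𝒜def
  have hcover : ∀ x ∈ G, ∃ p ∈ 𝒜, g₀ p x = 1 := by
    intro x hx
    obtain ⟨ε, hε, hball⟩ := Metric.isOpen_iff.mp hG x hx
    obtain ⟨q, hqS, hq⟩ := hSdense.exists_dist_lt x (show (0 : ℝ) < ε / 4 by linarith)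
    obtain ⟨rr, hr1, hr2⟩ := exists_rat_btwn (show (ε / 2 : ℝ) < 3 * ε / 4 by linarith)
    have hdq : dist x q < ε / 4 := hq
    have hpos : 0 < (rr : ℝ) - dist x q := by
      have := dist_nonneg (x := x) (y := q)
      linarith
    obtain ⟨m, hm⟩ := exists_nat_ge ((rr : ℝ) - dist x q)⁻¹
    set p : ↥S × ℚ × ℕ := (⟨q, hqS⟩, rr, m) with hpdef
    have hsub : Metric.ball (q : Fin d → ℝ) (rr : ℝ) ⊆ G := by
      intro z hz
      rw [Metric.mem_ball] at hz
      apply hball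
      rw [Metric.mem_ball]
      calc dist z x ≤ dist z q + dist q x := dist_triangle z q x
        _ < rr + ε / 4 := by
            rw [dist_comm q x]; exact add_lt_add hz hdq
        _ < ε := by linarith
    refine ⟨p, ?_, ?_⟩
    · intro y
      refine le_trans (hg₀ball p y) ?_
      exact Set.indicator_le_indicator_of_subset hsub (fun _ => zero_le_one) y
    · have h1 : 1 ≤ (m : ℝ) * ((rr : ℝ) - dist x q) := by
        rw [← inv_mul_cancel₀ hpos.ne']
        exact mul_le_mul_of_nonneg_right hm hpos.le
      show max 0 (min 1 ((m : ℝ) * ((rr : ℝ) - dist x (q : Fin d → ℝ)))) = 1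
      rw [min_eq_left h1, max_eq_right zero_le_one]
  rcases Set.eq_empty_or_nonempty 𝒜 with h𝒜e | h𝒜ne
  · have hGe : G = ∅ := by
      rw [Set.eq_empty_iff_forall_notMem]
      intro x hx
      obtain ⟨p, hp, _⟩ := hcover x hx
      rw [h𝒜e] at hp
      exact hp
    rw [hGe]
    have h0 : Q ∅ = 0 := by simp
    rw [h0]
    exact zero_le
  obtain ⟨e, he⟩ := (Set.to_countable 𝒜).exists_eq_range h𝒜ne
  set W : (↥S × ℚ × ℕ) → Set (Fin d → ℝ) := fun p => {x | g₀ p x = 1} with hWdef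
  have hWmeas : ∀ p, MeasurableSet (W p) :=
    fun p => (hg₀cont p).measurable (measurableSet_singleton (1 : ℝ))
  set V : ℕ → Set (Fin d → ℝ) := fun k => ⋃ (j : ℕ) (_ : j < k), W (e j) with hVdef
  have hVmono : Monotone V := by
    intro k l hkl x hx
    simp only [hVdef, Set.mem_iUnion] at hx ⊢
    obtain ⟨j, hj, h⟩ := hx
    exact ⟨j, lt_of_lt_of_le hj hkl, h⟩
  have hVmeas : ∀ k, MeasurableSet (V k) := fun k =>
    MeasurableSet.iUnion fun j => MeasurableSet.iUnion fun _ => hWmeas (e j)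
  have hWG : ∀ p ∈ 𝒜, W p ⊆ G := by
    intro p hp x hx
    have h1 : g₀ p x = 1 := hx
    by_contra hxG
    have := hp x
    rw [Set.indicator_of_notMem hxG, h1] at this
    linarith
  have hVG : (⋃ k, V k) = G := by
    apply Set.Subset.antisymm
    · intro x hx
      simp only [hVdef, Set.mem_iUnion] at hx
      obtain ⟨k, j, _, hW⟩ := hx
      exact hWG (e j) (he ▸ Set.mem_range_self j) hW
    · intro x hx
      obtain ⟨p, hp, hpx⟩ := hcover x hx
      rw [he] at hp
      obtain ⟨j, rfl⟩ := hp
      simp only [hVdef, Set.mem_iUnion]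
      exact ⟨j + 1, j, Nat.lt_succ_self j, hpx⟩
  have hVlim : Tendsto (fun k => ((Q : Measure (Fin d → ℝ)) (V k)).toReal) atTop
      (𝓝 (((Q : Measure (Fin d → ℝ)) G).toReal)) := by
    have h1 : Tendsto (fun k => (Q : Measure (Fin d → ℝ)) (V k)) atTop
        (𝓝 ((Q : Measure (Fin d → ℝ)) (⋃ k, V k))) := tendsto_measure_iUnion_atTop hVmono
    rw [hVG] at h1
    exact (ENNReal.tendsto_toReal (measure_ne_top _ _)).comp h1
  set FF : ℕ → Finset (↥S × ℚ × ℕ) := fun k => (Finset.range k).image e with hFFdef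
  have hFFle : ∀ k x, gg (FF k) x ≤ Set.indicator G (fun _ => (1 : ℝ)) x := by
    intro k x
    refine (Finset.fold_max_le _).mpr ⟨Set.indicator_nonneg (fun _ _ => zero_le_one) x, ?_⟩
    intro p hp
    obtain ⟨j, _, rfl⟩ := Finset.mem_image.mp hp
    exact (he ▸ Set.mem_range_self j : e j ∈ 𝒜) x
  have hFFge : ∀ k x, Set.indicator (V k) (fun _ => (1 : ℝ)) x ≤ gg (FF k) x := by
    intro k x
    by_cases hx : x ∈ V k
    · rw [Set.indicator_of_mem hx]
      simp only [hVdef, Set.mem_iUnion] at hx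
      obtain ⟨j, hj, hW⟩ := hx
      refine (Finset.le_fold_max _).mpr (Or.inr ⟨e j,
        Finset.mem_image_of_mem e (Finset.mem_range.mpr hj), ?_⟩)
      exact (hW : g₀ (e j) x = 1).ge
    · rw [Set.indicator_of_notMem hx]
      exact hgg0 _ x
  have hQV : ∀ k, ((Q : Measure (Fin d → ℝ)) (V k)).toReal
      ≤ ∫ x, f x * gg (FF k) x ∂(P : Measure (Fin d → ℝ)) := by
    intro k
    have h1 : ((Q : Measure (Fin d → ℝ)) (V k)).toReal
        = ∫ x, Set.indicator (V k) (fun _ => (1 : ℝ)) x ∂(Q : Measure (Fin d → ℝ)) :=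
      (integral_indicator_one (hVmeas k)).symm
    rw [h1, ← hCOV (gg (FF k)) (hggmeas (FF k))]
    refine integral_mono
      ((integrable_const (μ := (Q : Measure (Fin d → ℝ))) (1 : ℝ)).indicator (hVmeas k)) ?_
      (hFFge k)
    refine Integrable.mono' (integrable_const (1 : ℝ))
      (hggmeas (FF k)).aestronglyMeasurable (Filter.Eventually.of_forall fun x => ?_)
    rw [Real.norm_eq_abs, abs_of_nonneg (hgg0 (FF k) x)]
    exact hgg1 (FF k) x
  -- conclude the liminf bound
  refine le_of_forall_lt fun c hc => ?_
  have hcR : (c : ℝ) < ((Q : Measure (Fin d → ℝ)) G).toReal := by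
    have h := hc
    rw [← ENNReal.coe_lt_coe, ProbabilityMeasure.ennreal_coeFn_eq_coeFn_toMeasure] at h
    have := ENNReal.toReal_strict_mono (measure_ne_top _ _) h
    simpa using this
  set s' : ℝ := ((c : ℝ) + ((Q : Measure (Fin d → ℝ)) G).toReal) / 2 with hs'def
  have hs1 : (c : ℝ) < s' := by rw [hs'def]; linarith
  have hs2 : s' < ((Q : Measure (Fin d → ℝ)) G).toReal := by rw [hs'def]; linarith
  have hs0 : 0 ≤ s' := le_trans c.coe_nonneg hs1.le
  obtain ⟨k, hk⟩ := (hVlim.eventually_const_lt hs2).exists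
  have hLA : s' < ∫ x, f x * gg (FF k) x ∂(P : Measure (Fin d → ℝ)) :=
    lt_of_lt_of_le hk (hQV k)
  have hev1 : ∀ᶠ n in atTop,
      s' < (∑ i ∈ Finset.range n, w n i * gg (FF k) (X i ω)) / D n :=
    (hq (FF k)).eventually_const_lt hLA
  have hqv : ∀ n, 1 ≤ n →
      (∑ i ∈ Finset.range n, w n i * gg (FF k) (X i ω)) / D n ≤ ((M n) G).toReal := by
    intro n hn
    have h1 : ((M n) G).toReal
        = (∑ i ∈ Finset.range n, w n i * Set.indicator G (fun _ => (1 : ℝ)) (X i ω)) / D n := by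
      rw [hM_apply n hn G hG.measurableSet, ENNReal.toReal_ofReal]
      exact div_nonneg (Finset.sum_nonneg fun i _ => mul_nonneg (hw0 n i).le
        (Set.indicator_nonneg (fun _ _ => zero_le_one) _)) (hD0 n hn).le
    rw [h1]
    refine (div_le_div_iff_of_pos_right (hD0 n hn)).mpr (Finset.sum_le_sum fun i _ => ?_)
    exact mul_le_mul_of_nonneg_left (hFFle k (X i ω)) (hw0 n i).le
  have hev2 : ∀ᶠ kk in atTop, s' < (((QP (kk + 1) : Measure (Fin d → ℝ))) G).toReal := by
    have h' : ∀ᶠ n in atTop, s' < ((M n) G).toReal := by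
      filter_upwards [hev1, eventually_ge_atTop 1] with n h1 h2
      exact lt_of_lt_of_le h1 (hqv n h2)
    have h'' := (tendsto_add_atTop_nat 1).eventually h'
    filter_upwards [h''] with kk hkk
    rwa [hQPcoe (kk + 1) (by omega)]
  have hcb : IsBoundedUnder (· ≤ ·) atTop (fun kk : ℕ => QP (kk + 1) G) :=
    Filter.isBoundedUnder_of ⟨1, fun kk => ProbabilityMeasure.apply_le_one _ _⟩
  refine lt_of_lt_of_le (show c < Real.toNNReal s' from ?_)
    (le_liminf_of_le hcb.isCoboundedUnder_ge ?_)
  · rw [← NNReal.coe_lt_coe, Real.coe_toNNReal _ hs0]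
    exact hs1
  · filter_upwards [hev2] with kk h
    rw [← NNReal.coe_le_coe, Real.coe_toNNReal _ hs0]
    exact h.le
end

section
/- Let {X_i}_{i≥1} be a sequence of independent, identically distributed random vectors in ℝ^d with common distribution P, let P_n denote the empirical probability measure of X_1, …, X_n, and let α ∈ (0, 1]. Then almost surely limsup_n P_n^α ⊆ P^α, i.e., almost surely every weak limit Q of a sequence {Q_{n_k}}_k with Q_{n_k} ∈ P_{n_k}^α for all k satisfies Q ∈ P^α. -/
open MeasureTheory ProbabilityTheory Filter Topology

/-- Strong law of large numbers applied to the indicators of a fixed Borel set `B`: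
the empirical frequencies of `B` converge almost surely to `P B`. -/
lemma aux_slln_trim {d : ℕ} {Ω : Type*} [MeasurableSpace Ω]
    (μ : Measure Ω) [IsProbabilityMeasure μ]
    (P : ProbabilityMeasure (Fin d → ℝ))
    (X : ℕ → Ω → (Fin d → ℝ))
    (hmeas : ∀ i, Measurable (X i))
    (hindep : iIndepFun X μ)
    (hdist : ∀ i, μ.map (X i) = (P : Measure (Fin d → ℝ)))
    (B : Set (Fin d → ℝ)) (hB : MeasurableSet B) :
    ∀ᵐ ω ∂μ, Tendsto
      (fun n : ℕ => (∑ i ∈ Finset.range n, Set.indicator B (fun _ => (1:ℝ)) (X i ω)) / n)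
      atTop (𝓝 (((P : Measure (Fin d → ℝ)) B).toReal)) := by
  have hm : Measurable (B.indicator (fun _ => (1:ℝ))) := measurable_const.indicator hB
  have hint : Integrable ((B.indicator (fun _ => (1:ℝ))) ∘ X 0) μ := by
    rw [← integrable_map_measure hm.aestronglyMeasurable (hmeas 0).aemeasurable, hdist 0]
    exact (integrable_const (1:ℝ)).indicator hB
  have hpair : Pairwise (Function.onFun (IndepFun · · μ) (fun i => (B.indicator (fun _ => (1:ℝ))) ∘ X i)) :=
    fun i j hij => (hindep.indepFun hij).comp hm hm
  have hident : ∀ i, IdentDistrib ((B.indicator (fun _ => (1:ℝ))) ∘ X i)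
      ((B.indicator (fun _ => (1:ℝ))) ∘ X 0) μ μ := fun i =>
    IdentDistrib.comp ⟨(hmeas i).aemeasurable, (hmeas 0).aemeasurable,
      by rw [hdist i, hdist 0]⟩ hm
  have h := strong_law_ae_real (fun i => (B.indicator (fun _ => (1:ℝ))) ∘ X i) hint hpair hident
  have hE : μ[(B.indicator (fun _ => (1:ℝ))) ∘ X 0] = ((P : Measure (Fin d → ℝ)) B).toReal := by
    simp only [Function.comp_apply]
    rw [← integral_map (hmeas 0).aemeasurable hm.aestronglyMeasurable, hdist 0,
      integral_indicator_const (1:ℝ) hB]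
    simp
    rfl
  rw [hE] at h
  exact h

/-- Open balls with rational centers and radii in `ℝ^d`. -/
def ratBall {d : ℕ} (p : (Fin d → ℚ) × ℚ) : Set (Fin d → ℝ) :=
  Metric.ball (fun i => ((p.1 i : ℝ))) (p.2 : ℝ)

/-- Any point of an open set of `ℝ^d` lies in a rational ball contained in the set. -/
lemma exists_ratBall {d : ℕ} {U : Set (Fin d → ℝ)} (hU : IsOpen U) {x : Fin d → ℝ}
    (hx : x ∈ U) : ∃ p, x ∈ ratBall p ∧ ratBall p ⊆ U := by
  obtain ⟨ε, hε, hball⟩ := Metric.isOpen_iff.mp hU x hx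
  obtain ⟨r, hr0, hrε⟩ := exists_rat_btwn (by linarith : (0:ℝ) < ε/2)
  choose q hq using fun i => exists_rat_near (x i) hr0
  refine ⟨(q, r), ?_, ?_⟩
  · rw [ratBall, Metric.mem_ball]
    exact (dist_pi_lt_iff hr0).mpr fun i => by
      rw [Real.dist_eq]; exact hq i
  · intro y hy
    apply hball
    rw [Metric.mem_ball]
    rw [ratBall, Metric.mem_ball] at hy
    have hxq : dist (fun i => ((q i : ℝ))) x < (r:ℝ) :=
      (dist_pi_lt_iff hr0).mpr fun i => by
        rw [Real.dist_eq, abs_sub_comm]; exact hq i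
    calc dist y x ≤ dist y (fun i => ((q i : ℝ))) + dist (fun i => ((q i : ℝ))) x :=
          dist_triangle _ _ _
      _ < r + r := add_lt_add hy hxq
      _ < ε := by linarith

/-- Let `X₁, X₂, …` be i.i.d. random vectors in `ℝ^d` with common distribution `P`, let `Pₙ`
be the empirical measure of `X₁, …, Xₙ` and let `α ∈ (0,1]`. Then almost surely
`limsupₙ Pₙ^α ⊆ P^α`: every weak limit `Q` of a sequence `{Q_{n_k}}` with
`Q_{n_k} ∈ P_{n_k}^α` belongs to `P^α`. Here `X i` denotes `X_{i+1}` and the empirical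
measures are described by the hypothesis `hPn`. -/
theorem limsup_subset_trimSet {d : ℕ} {Ω : Type*} [MeasurableSpace Ω]
    (μ : Measure Ω) [IsProbabilityMeasure μ]
    (P : ProbabilityMeasure (Fin d → ℝ))
    (X : ℕ → Ω → (Fin d → ℝ))
    (hmeas : ∀ i, Measurable (X i))
    (hindep : iIndepFun X μ)
    (hdist : ∀ i, μ.map (X i) = (P : Measure (Fin d → ℝ)))
    (Pn : Ω → ℕ → ProbabilityMeasure (Fin d → ℝ))
    (hPn : ∀ ω : Ω, ∀ n : ℕ, 1 ≤ n → ∀ B : Set (Fin d → ℝ), MeasurableSet B →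
      ((Pn ω n : Measure (Fin d → ℝ)) B).toReal
        = (∑ i ∈ Finset.range n, Set.indicator B (fun _ => (1 : ℝ)) (X i ω)) / n)
    (α : ℝ) (hα : α ∈ Set.Ioc (0 : ℝ) 1) :
    ∀ᵐ ω ∂μ, ∀ Q : ProbabilityMeasure (Fin d → ℝ),
      (∃ (ns : ℕ → ℕ) (Qk : ℕ → ProbabilityMeasure (Fin d → ℝ)),
        StrictMono ns ∧ 1 ≤ ns 0 ∧
        (∀ k, Qk k ∈ trimSet (Pn ω (ns k)) α) ∧
        Tendsto Qk atTop (nhds Q)) →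
      Q ∈ trimSet P α := by
  obtain ⟨hα0, _⟩ := hα
  set c : ENNReal := ENNReal.ofReal α⁻¹ with hc
  have hc0 : c ≠ 0 := by
    simp [hc, (ENNReal.ofReal_pos.mpr (inv_pos.mpr hα0)).ne']
  have hctop : c ≠ ⊤ := ENNReal.ofReal_ne_top
  have hFmeas : ∀ s : Finset ((Fin d → ℚ) × ℚ),
      MeasurableSet (⋃ p ∈ s, ratBall p) :=
    fun s => (isOpen_biUnion fun p _ => Metric.isOpen_ball).measurableSet
  have key : ∀ᵐ ω ∂μ, ∀ s : Finset ((Fin d → ℚ) × ℚ),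
      Tendsto (fun n : ℕ => ((Pn ω n : Measure (Fin d → ℝ)) (⋃ p ∈ s, ratBall p)))
        atTop (𝓝 ((P : Measure (Fin d → ℝ)) (⋃ p ∈ s, ratBall p))) := by
    rw [ae_all_iff]
    intro s
    filter_upwards [aux_slln_trim μ P X hmeas hindep hdist _ (hFmeas s)] with ω hω
    have h1 : Tendsto (fun n : ℕ => ((Pn ω n : Measure (Fin d → ℝ)) (⋃ p ∈ s, ratBall p)).toReal)
        atTop (𝓝 (((P : Measure (Fin d → ℝ)) (⋃ p ∈ s, ratBall p)).toReal)) := by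
      refine hω.congr' ?_
      filter_upwards [eventually_ge_atTop 1] with n hn
      exact (hPn ω n hn _ (hFmeas s)).symm
    have h2 := ENNReal.tendsto_ofReal h1
    rw [ENNReal.ofReal_toReal (measure_ne_top _ _)] at h2
    exact h2.congr fun n => ENNReal.ofReal_toReal (measure_ne_top _ _)
  filter_upwards [key] with ω hω
  rintro Q ⟨ns, Qk, hns, hns0, hQk, hQlim⟩
  -- Step 1: the inequality holds for finite unions of rational balls
  have step1 : ∀ s : Finset ((Fin d → ℚ) × ℚ),
      (Q : Measure (Fin d → ℝ)) (⋃ p ∈ s, ratBall p)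
        ≤ c * (P : Measure (Fin d → ℝ)) (⋃ p ∈ s, ratBall p) := by
    intro s
    have hGopen : IsOpen (⋃ p ∈ s, ratBall p) := isOpen_biUnion fun p _ => Metric.isOpen_ball
    have h1 : (Q : Measure (Fin d → ℝ)) (⋃ p ∈ s, ratBall p)
        ≤ atTop.liminf fun k => (Qk k : Measure (Fin d → ℝ)) (⋃ p ∈ s, ratBall p) :=
      ProbabilityMeasure.le_liminf_measure_open_of_tendsto hQlim hGopen
    have h2 : atTop.liminf (fun k => (Qk k : Measure (Fin d → ℝ)) (⋃ p ∈ s, ratBall p))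
        ≤ atTop.liminf fun k => c * (Pn ω (ns k) : Measure (Fin d → ℝ)) (⋃ p ∈ s, ratBall p) :=
      liminf_le_liminf (Eventually.of_forall fun k => hQk k _ (hFmeas s))
    have h3 : Tendsto (fun k => c * (Pn ω (ns k) : Measure (Fin d → ℝ)) (⋃ p ∈ s, ratBall p))
        atTop (𝓝 (c * (P : Measure (Fin d → ℝ)) (⋃ p ∈ s, ratBall p))) :=
      ENNReal.Tendsto.const_mul ((hω s).comp hns.tendsto_atTop) (Or.inr hctop)
    exact h1.trans (h2.trans_eq h3.liminf_eq)
  -- Step 2: the inequality holds for all open sets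
  have step2 : ∀ U : Set (Fin d → ℝ), IsOpen U →
      (Q : Measure (Fin d → ℝ)) U ≤ c * (P : Measure (Fin d → ℝ)) U := by
    intro U hU
    set S := {s : Finset ((Fin d → ℚ) × ℚ) // ∀ p ∈ s, ratBall p ⊆ U} with hS
    have hsub : ∀ s : S, (⋃ p ∈ (s : Finset ((Fin d → ℚ) × ℚ)), ratBall p) ⊆ U :=
      fun s => Set.iUnion₂_subset fun p hp => s.2 p hp
    have hcover : U = ⋃ s : S, ⋃ p ∈ (s : Finset ((Fin d → ℚ) × ℚ)), ratBall p := by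
      apply Set.Subset.antisymm
      · intro x hx
        obtain ⟨p, hxp, hpU⟩ := exists_ratBall hU hx
        refine Set.mem_iUnion.mpr ⟨⟨{p}, by simpa using hpU⟩, ?_⟩
        simpa using hxp
      · exact Set.iUnion_subset hsub
    have hdir : Directed (· ⊆ ·)
        (fun s : S => ⋃ p ∈ (s : Finset ((Fin d → ℚ) × ℚ)), ratBall p) := by
      intro s t
      refine ⟨⟨s.1 ∪ t.1, fun p hp => ?_⟩, ?_, ?_⟩
      · rcases Finset.mem_union.mp hp with h | h
        exacts [s.2 p h, t.2 p h]
      · exact Set.biUnion_subset_biUnion_left (fun p hp => Finset.mem_union_left _ hp)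
      · exact Set.biUnion_subset_biUnion_left (fun p hp => Finset.mem_union_right _ hp)
    calc (Q : Measure (Fin d → ℝ)) U
        = ⨆ s : S, (Q : Measure (Fin d → ℝ))
            (⋃ p ∈ (s : Finset ((Fin d → ℚ) × ℚ)), ratBall p) := by
          have h := hdir.measure_iUnion (μ := (Q : Measure (Fin d → ℝ)))
          rw [← hcover] at h; exact h
      _ ≤ c * (P : Measure (Fin d → ℝ)) U := by
          refine iSup_le fun s => (step1 s.1).trans ?_
          gcongr
          exact hsub s
  -- Step 3: all Borel sets, via outer regularity of `P`
  intro B _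
  refine ENNReal.le_of_forall_pos_le_add fun ε hε _ => ?_
  have hδ : ((ε : ENNReal) / c) ≠ 0 := by
    simp [ENNReal.div_ne_zero, hε.ne', hctop]
  obtain ⟨U, hBU, hUopen, hUlt⟩ :=
    Set.exists_isOpen_lt_add B (measure_ne_top (P : Measure (Fin d → ℝ)) B) hδ
  calc (Q : Measure (Fin d → ℝ)) B ≤ (Q : Measure (Fin d → ℝ)) U := measure_mono hBU
    _ ≤ c * (P : Measure (Fin d → ℝ)) U := step2 U hUopen
    _ ≤ c * ((P : Measure (Fin d → ℝ)) B + (ε : ENNReal) / c) := mul_le_mul_right hUlt.le c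
    _ = c * (P : Measure (Fin d → ℝ)) B + c * ((ε : ENNReal) / c) := by rw [mul_add]
    _ ≤ c * (P : Measure (Fin d → ℝ)) B + ε :=
        add_le_add_right (le_of_eq (ENNReal.mul_div_cancel hc0 hctop)) _
end

section
/- Let α ∈ (0, 1], let c = α^{-1}, and let {P_n}_n, {Q_n}_n and P, Q be Borel probability measures on ℝ^d such that P_n converges weakly to P, Q_n converges weakly to Q, and Q_n(B) ≤ c P_n(B) for every Borel set B ⊆ ℝ^d and every n. Then Q(B) ≤ c P(B) for every Borel set B ⊆ ℝ^d; in other words, if P_n → P weakly then limsup_n P_n^α ⊆ P^α. -/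
open MeasureTheory Filter Topology

/-- Let `α ∈ (0,1]` and `c = α⁻¹`. If `Pₙ → P` and `Qₙ → Q` weakly, with
`Qₙ(B) ≤ c Pₙ(B)` for every Borel set `B` and every `n`, then `Q(B) ≤ c P(B)` for every
Borel set `B`; in other words, `Q ∈ P^α`. -/
theorem trimSet_weak_limit {d : ℕ} (α : ℝ) (hα : α ∈ Set.Ioc (0 : ℝ) 1)
    (c : ℝ) (hc : c = α⁻¹)
    (Pseq Qseq : ℕ → ProbabilityMeasure (Fin d → ℝ))
    (P Q : ProbabilityMeasure (Fin d → ℝ))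
    (hP : Tendsto Pseq atTop (nhds P))
    (hQ : Tendsto Qseq atTop (nhds Q))
    (hle : ∀ n, ∀ B : Set (Fin d → ℝ), MeasurableSet B →
      (Qseq n : Measure (Fin d → ℝ)) B ≤
        ENNReal.ofReal c * (Pseq n : Measure (Fin d → ℝ)) B) :
    (∀ B : Set (Fin d → ℝ), MeasurableSet B →
      (Q : Measure (Fin d → ℝ)) B ≤ ENNReal.ofReal c * (P : Measure (Fin d → ℝ)) B)
    ∧ Q ∈ trimSet P α := by
  have hcne : (ENNReal.ofReal c) ≠ ⊤ := ENNReal.ofReal_ne_top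
  -- closed sets first
  have hclosed : ∀ F : Set (Fin d → ℝ), IsClosed F →
      (Q : Measure (Fin d → ℝ)) F ≤ ENNReal.ofReal c * (P : Measure (Fin d → ℝ)) F := by
    intro F hF
    have key : ∀ δ : ℝ, 0 < δ →
        (Q : Measure (Fin d → ℝ)) F ≤
          ENNReal.ofReal c * (P : Measure (Fin d → ℝ)) (Metric.cthickening δ F) := by
      intro δ hδ
      have h0 : (Q : Measure (Fin d → ℝ)) F ≤
          (Q : Measure (Fin d → ℝ)) (Metric.thickening δ F) :=
        measure_mono (Metric.self_subset_thickening hδ F)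
      have h1 : (Q : Measure (Fin d → ℝ)) (Metric.thickening δ F) ≤
          atTop.liminf (fun n => (Qseq n : Measure (Fin d → ℝ)) (Metric.thickening δ F)) :=
        ProbabilityMeasure.le_liminf_measure_open_of_tendsto hQ Metric.isOpen_thickening
      have h2 : atTop.liminf (fun n => (Qseq n : Measure (Fin d → ℝ)) (Metric.thickening δ F)) ≤
          atTop.liminf (fun n =>
            ENNReal.ofReal c * (Pseq n : Measure (Fin d → ℝ)) (Metric.cthickening δ F)) := by
        refine Filter.liminf_le_liminf (Filter.Eventually.of_forall fun n => ?_)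
        exact (hle n _ Metric.isOpen_thickening.measurableSet).trans
          (mul_le_mul_right (measure_mono (Metric.thickening_subset_cthickening δ F)) _)
      have h3 : atTop.liminf (fun n =>
            ENNReal.ofReal c * (Pseq n : Measure (Fin d → ℝ)) (Metric.cthickening δ F)) ≤
          atTop.limsup (fun n =>
            ENNReal.ofReal c * (Pseq n : Measure (Fin d → ℝ)) (Metric.cthickening δ F)) :=
        Filter.liminf_le_limsup
      have h4 : atTop.limsup (fun n =>
            ENNReal.ofReal c * (Pseq n : Measure (Fin d → ℝ)) (Metric.cthickening δ F))
          = ENNReal.ofReal c *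
            atTop.limsup (fun n => (Pseq n : Measure (Fin d → ℝ)) (Metric.cthickening δ F)) :=
        ENNReal.limsup_const_mul_of_ne_top hcne
      have h5 : atTop.limsup
            (fun n => (Pseq n : Measure (Fin d → ℝ)) (Metric.cthickening δ F)) ≤
          (P : Measure (Fin d → ℝ)) (Metric.cthickening δ F) :=
        ProbabilityMeasure.limsup_measure_closed_le_of_tendsto hP Metric.isClosed_cthickening
      calc (Q : Measure (Fin d → ℝ)) F ≤ _ := h0
        _ ≤ _ := h1
        _ ≤ _ := h2
        _ ≤ _ := h3
        _ = _ := h4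
        _ ≤ _ := mul_le_mul_right h5 _
    have htend : Tendsto (fun δ : ℝ =>
        ENNReal.ofReal c * (P : Measure (Fin d → ℝ)) (Metric.cthickening δ F))
        (𝓝[>] (0:ℝ)) (𝓝 (ENNReal.ofReal c * (P : Measure (Fin d → ℝ)) F)) := by
      apply Tendsto.mono_left _ nhdsWithin_le_nhds
      exact ENNReal.Tendsto.const_mul
        (tendsto_measure_cthickening_of_isClosed
          ⟨1, one_pos, measure_ne_top _ _⟩ hF) (Or.inr hcne)
    exact ge_of_tendsto htend
      (eventually_nhdsWithin_of_forall fun δ hδ => key δ hδ)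
  have main : ∀ B : Set (Fin d → ℝ), MeasurableSet B →
      (Q : Measure (Fin d → ℝ)) B ≤ ENNReal.ofReal c * (P : Measure (Fin d → ℝ)) B := by
    intro B hB
    apply ENNReal.le_of_forall_pos_le_add
    intro ε hε _
    obtain ⟨F, hFB, hFc, hQF⟩ := hB.exists_isClosed_lt_add
      (measure_ne_top (Q : Measure (Fin d → ℝ)) B) (ENNReal.coe_ne_zero.mpr hε.ne')
    calc (Q : Measure (Fin d → ℝ)) B ≤ (Q : Measure (Fin d → ℝ)) F + ε := hQF.le
      _ ≤ ENNReal.ofReal c * (P : Measure (Fin d → ℝ)) F + ε :=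
        add_le_add_left (hclosed F hFc) _
      _ ≤ ENNReal.ofReal c * (P : Measure (Fin d → ℝ)) B + ε :=
        add_le_add_left (mul_le_mul_right (measure_mono hFB) _) _
  exact ⟨main, fun B hB => hc ▸ main B hB⟩
end

section
/- Let {X_i}_{i≥1} be a sequence of independent, identically distributed random vectors in ℝ^d with common distribution P, let P_n denote the empirical probability measure of X_1, …, X_n, and let α ∈ (0, 1]. Then almost surely the family ⋃_{n=1}^∞ P_n^α of all probability measures belonging to the α-trimming of some empirical measure P_n is tight. -/
open MeasureTheory ProbabilityTheory Filter Topology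

/-- A family of Borel probability measures on `ℝ^d` is tight if for every `ε > 0` there is a
compact set `K` with `P K > 1 - ε` for every member `P` of the family. -/
def TightFamily {d : ℕ} (Pi : Set (ProbabilityMeasure (Fin d → ℝ))) : Prop :=
  ∀ ε : ℝ, 0 < ε → ∃ K : Set (Fin d → ℝ), IsCompact K ∧
    ∀ P ∈ Pi, (1 : ℝ) - ε < ((P : Measure (Fin d → ℝ)) K).toReal

/-- Let `X₁, X₂, …` be i.i.d. random vectors in `ℝ^d` with common distribution `P`, let `Pₙ`
be the empirical measure of `X₁, …, Xₙ` and let `α ∈ (0,1]`. Then almost surely the family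
`⋃ₙ Pₙ^α` of all probability measures belonging to the `α`-trimming of some empirical measure
is tight. Here `X i` denotes `X_{i+1}` and the empirical measures are described by the
hypothesis `hPn`. -/
theorem tight_union_trimmed_empirical {d : ℕ} {Ω : Type*} [MeasurableSpace Ω]
    (μ : Measure Ω) [IsProbabilityMeasure μ]
    (P : ProbabilityMeasure (Fin d → ℝ))
    (X : ℕ → Ω → (Fin d → ℝ))
    (hmeas : ∀ i, Measurable (X i))
    (hindep : iIndepFun X μ)
    (hdist : ∀ i, μ.map (X i) = (P : Measure (Fin d → ℝ)))
    (Pn : Ω → ℕ → ProbabilityMeasure (Fin d → ℝ))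
    (hPn : ∀ ω : Ω, ∀ n : ℕ, 1 ≤ n → ∀ B : Set (Fin d → ℝ), MeasurableSet B →
      ((Pn ω n : Measure (Fin d → ℝ)) B).toReal
        = (∑ i ∈ Finset.range n, Set.indicator B (fun _ => (1 : ℝ)) (X i ω)) / n)
    (α : ℝ) (hα : α ∈ Set.Ioc (0 : ℝ) 1) :
    ∀ᵐ ω ∂μ, TightFamily {Q | ∃ n : ℕ, 1 ≤ n ∧ Q ∈ trimSet (Pn ω n) α} := by
  obtain ⟨hα0, hα1⟩ := hα
  set C : ℕ → Set (Fin d → ℝ) := fun m => (Metric.closedBall 0 (m : ℝ))ᶜ with hCdef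
  have hCmeas : ∀ m, MeasurableSet (C m) :=
    fun m => Metric.isClosed_closedBall.measurableSet.compl
  -- Strong law of large numbers for the indicator of `C m`
  have hSLLN : ∀ m : ℕ, ∀ᵐ ω ∂μ,
      Tendsto (fun n : ℕ => (∑ i ∈ Finset.range n,
        Set.indicator (C m) (fun _ => (1:ℝ)) (X i ω)) / n) atTop
        (𝓝 (((P : Measure (Fin d → ℝ)) (C m)).toReal)) := by
    intro m
    set f : (Fin d → ℝ) → ℝ := Set.indicator (C m) (fun _ => (1:ℝ)) with hf
    have hfmeas : Measurable f := measurable_const.indicator (hCmeas m)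
    have hkey : ∀ i, (fun ω => f (X i ω))
        = Set.indicator (X i ⁻¹' C m) (fun _ => (1:ℝ)) := by
      intro i; ext ω
      by_cases h : X i ω ∈ C m <;>
        simp [hf, h, Set.indicator_of_mem, Set.indicator_of_notMem, Set.mem_preimage]
    have hint : Integrable (fun ω => f (X 0 ω)) μ := by
      rw [hkey 0]
      exact (integrable_const (1:ℝ)).indicator ((hmeas 0) (hCmeas m))
    have hindep' : Pairwise (Function.onFun (IndepFun · · μ) (fun i ω => f (X i ω))) :=
      fun i j hij => (hindep.indepFun hij).comp hfmeas hfmeas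
    have hident : ∀ i, IdentDistrib (fun ω => f (X i ω)) (fun ω => f (X 0 ω)) μ μ := by
      intro i
      have hXid : IdentDistrib (X i) (X 0) μ μ :=
        ⟨(hmeas i).aemeasurable, (hmeas 0).aemeasurable, by rw [hdist i, hdist 0]⟩
      exact hXid.comp hfmeas
    have h := strong_law_ae_real (fun i ω => f (X i ω)) hint hindep' hident
    have hE : (μ[fun ω => f (X 0 ω)]) = ((P : Measure (Fin d → ℝ)) (C m)).toReal := by
      rw [hkey 0, integral_indicator_const (1:ℝ) ((hmeas 0) (hCmeas m)), smul_eq_mul,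
        mul_one, measureReal_def, ← Measure.map_apply (hmeas 0) (hCmeas m), hdist 0]
    rw [hE] at h
    exact h
  -- the tail masses of `P` go to zero
  have hPC : Tendsto (fun m => ((P : Measure (Fin d → ℝ)) (C m)).toReal) atTop (𝓝 0) := by
    have hanti : Antitone C := fun a b hab =>
      Set.compl_subset_compl.2 (Metric.closedBall_subset_closedBall (by exact_mod_cast hab))
    have h1 : Tendsto (fun m => (P : Measure (Fin d → ℝ)) (C m)) atTop
        (𝓝 ((P : Measure (Fin d → ℝ)) (⋂ m, C m))) :=
      tendsto_measure_iInter_atTop (fun m => (hCmeas m).nullMeasurableSet) hanti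
        ⟨0, measure_ne_top _ _⟩
    have h2 : (⋂ m, C m) = (∅ : Set (Fin d → ℝ)) := by
      ext x
      simp only [Set.mem_iInter, Set.mem_empty_iff_false, iff_false, not_forall]
      obtain ⟨m, hm⟩ := exists_nat_ge ‖x‖
      exact ⟨m, by simp [hCdef, Metric.mem_closedBall, dist_zero_right, hm]⟩
    rw [h2, measure_empty] at h1
    have h3 := (ENNReal.tendsto_toReal (by simp)).comp h1
    exact h3
  filter_upwards [ae_all_iff.2 hSLLN] with ω hω
  intro ε hε
  have hαε : 0 < α * ε / 2 := by positivity
  obtain ⟨m, hm⟩ := (hPC.eventually (gt_mem_nhds hαε)).exists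
  obtain ⟨N, hN⟩ := eventually_atTop.1 ((hω m).eventually (gt_mem_nhds hm))
  set S : Set (Fin d → ℝ) := (fun i => X i ω) '' (Set.Iio (max N 1)) with hS
  have hSfin : S.Finite := (Set.finite_Iio _).image _
  set K : Set (Fin d → ℝ) := Metric.closedBall (0 : Fin d → ℝ) (m:ℝ) ∪ S with hK
  have hKcompact : IsCompact K := (isCompact_closedBall _ _).union hSfin.isCompact
  have hKmeas : MeasurableSet K :=
    (Metric.isClosed_closedBall.union hSfin.isClosed).measurableSet
  refine ⟨K, hKcompact, ?_⟩
  rintro Q ⟨n, hn1, hQ⟩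
  -- bound the empirical mass of `Kᶜ`
  have hPnK : ((Pn ω n : Measure (Fin d → ℝ)) Kᶜ).toReal < α * ε := by
    rcases le_or_gt (max N 1) n with h | h
    · have hsub : Kᶜ ⊆ C m := by
        rw [hK, Set.compl_union]; exact Set.inter_subset_left
      have h1 : ((Pn ω n : Measure (Fin d → ℝ)) Kᶜ).toReal
          ≤ ((Pn ω n : Measure (Fin d → ℝ)) (C m)).toReal :=
        ENNReal.toReal_mono (measure_ne_top _ _) (measure_mono hsub)
      have h2 : ((Pn ω n : Measure (Fin d → ℝ)) (C m)).toReal < α * ε / 2 := by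
        rw [hPn ω n (le_trans (le_max_right N 1) h) (C m) (hCmeas m)]
        exact hN n (le_trans (le_max_left N 1) h)
      linarith
    · have hzero : ((Pn ω n : Measure (Fin d → ℝ)) Kᶜ).toReal = 0 := by
        rw [hPn ω n hn1 Kᶜ hKmeas.compl]
        have hterm : ∀ i ∈ Finset.range n,
            Set.indicator Kᶜ (fun _ => (1:ℝ)) (X i ω) = 0 := by
          intro i hi
          apply Set.indicator_of_notMem
          have hXK : X i ω ∈ K :=
            Or.inr ⟨i, lt_trans (Finset.mem_range.1 hi) h, rfl⟩
          simpa using hXK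
        rw [Finset.sum_eq_zero hterm, zero_div]
      rw [hzero]; positivity
  -- bound the trimmed mass of `Kᶜ`
  have hQc : ((Q : Measure (Fin d → ℝ)) Kᶜ).toReal < ε := by
    have h1 := hQ Kᶜ hKmeas.compl
    have h2 : ((Q : Measure (Fin d → ℝ)) Kᶜ).toReal
        ≤ α⁻¹ * ((Pn ω n : Measure (Fin d → ℝ)) Kᶜ).toReal := by
      calc ((Q : Measure (Fin d → ℝ)) Kᶜ).toReal
          ≤ (ENNReal.ofReal α⁻¹ * (Pn ω n : Measure (Fin d → ℝ)) Kᶜ).toReal :=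
            ENNReal.toReal_mono
              (ENNReal.mul_ne_top ENNReal.ofReal_ne_top (measure_ne_top _ _)) h1
        _ = α⁻¹ * ((Pn ω n : Measure (Fin d → ℝ)) Kᶜ).toReal := by
            rw [ENNReal.toReal_mul, ENNReal.toReal_ofReal (inv_nonneg.2 hα0.le)]
    have h3 : α⁻¹ * ((Pn ω n : Measure (Fin d → ℝ)) Kᶜ).toReal < α⁻¹ * (α * ε) :=
      mul_lt_mul_of_pos_left hPnK (inv_pos.2 hα0)
    have h4 : α⁻¹ * (α * ε) = ε := by field_simp
    linarith
  have hsum : ((Q : Measure (Fin d → ℝ)) K).toReal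
      + ((Q : Measure (Fin d → ℝ)) Kᶜ).toReal = 1 := by
    rw [← ENNReal.toReal_add (measure_ne_top _ _) (measure_ne_top _ _),
      measure_add_measure_compl hKmeas]
    simp
  linarith
end

section
/- Let P be a Borel probability measure on ℝ^d with finite first moment and let α ∈ (0, 1]. Then the zonoid α-trimmed region of P equals the set of barycentres of the measures in the α-trimming of P: ZD^α(P) = { ∫_{ℝ^d} x dQ(x) : Q ∈ P^α }. -/
open MeasureTheory Filter Topology
open scoped NNReal ENNReal

/-- The zonoid `α`-trimmed region of `P`: the set of all vectors `∫ x g(x) dP(x)` where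
`g : ℝ^d → [0, α⁻¹]` is measurable with `∫ g dP = 1`. -/
def zonoidRegion {d : ℕ} (P : ProbabilityMeasure (Fin d → ℝ)) (α : ℝ) :
    Set (Fin d → ℝ) :=
  {y | ∃ g : (Fin d → ℝ) → ℝ, Measurable g ∧ (∀ x, g x ∈ Set.Icc (0 : ℝ) α⁻¹) ∧
    (∫ x, g x ∂(P : Measure (Fin d → ℝ))) = 1 ∧
    y = ∫ x, g x • x ∂(P : Measure (Fin d → ℝ))}

/-- For a Borel probability measure `P` on `ℝ^d` with finite first moment and `α ∈ (0,1]`,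
the zonoid `α`-trimmed region of `P` is the set of barycentres of the measures in the
`α`-trimming of `P`. -/
theorem zonoidRegion_eq_barycentres_trimSet {d : ℕ}
    (P : ProbabilityMeasure (Fin d → ℝ))
    (hmoment : Integrable (fun x : Fin d → ℝ => x) (P : Measure (Fin d → ℝ)))
    (α : ℝ) (hα : α ∈ Set.Ioc (0 : ℝ) 1) :
    zonoidRegion P α
      = {y | ∃ Q ∈ trimSet P α, y = ∫ x, x ∂(Q : Measure (Fin d → ℝ))} := by
  obtain ⟨hα0, hα1⟩ := hα
  have hαinv : (0 : ℝ) ≤ α⁻¹ := by positivity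
  ext y
  simp only [zonoidRegion, Set.mem_setOf_eq]
  constructor
  · rintro ⟨g, hg, hgIcc, hgint, rfl⟩
    -- define Q as P with density g
    set f : (Fin d → ℝ) → ℝ≥0 := fun x => (g x).toNNReal with hf
    have hfmeas : Measurable f := hg.real_toNNReal
    set ν : Measure (Fin d → ℝ) :=
      (P : Measure (Fin d → ℝ)).withDensity (fun x => (f x : ℝ≥0∞)) with hν
    have hgint' : Integrable g (P : Measure (Fin d → ℝ)) := by
      refine Integrable.mono' (integrable_const α⁻¹) hg.aestronglyMeasurable ?_
      filter_upwards with x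
      rw [Real.norm_eq_abs, abs_of_nonneg (hgIcc x).1]
      exact (hgIcc x).2
    have hcoe : ∀ x, ((f x : ℝ≥0) : ℝ≥0∞) = ENNReal.ofReal (g x) := fun x => rfl
    have hνuniv : ν Set.univ = 1 := by
      rw [hν, withDensity_apply _ MeasurableSet.univ, Measure.restrict_univ]
      simp_rw [hcoe]
      rw [← ofReal_integral_eq_lintegral_ofReal hgint'
        (Filter.Eventually.of_forall fun x => (hgIcc x).1), hgint, ENNReal.ofReal_one]
    have hνprob : IsProbabilityMeasure ν := ⟨hνuniv⟩
    refine ⟨⟨ν, hνprob⟩, ?_, ?_⟩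
    · intro B hB
      show ν B ≤ _
      rw [hν, withDensity_apply _ hB]
      calc ∫⁻ x in B, (f x : ℝ≥0∞) ∂(P : Measure (Fin d → ℝ))
          ≤ ∫⁻ _ in B, ENNReal.ofReal α⁻¹ ∂(P : Measure (Fin d → ℝ)) := by
            refine lintegral_mono fun x => ?_
            rw [hcoe]
            exact ENNReal.ofReal_le_ofReal (hgIcc x).2
        _ = ENNReal.ofReal α⁻¹ * (P : Measure (Fin d → ℝ)) B := by
            rw [setLIntegral_const]
    · show _ = ∫ x, x ∂ν
      rw [hν, integral_withDensity_eq_integral_smul hfmeas]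
      refine integral_congr_ae (Filter.Eventually.of_forall fun x => ?_)
      simp [hf, NNReal.smul_def, Real.coe_toNNReal _ (hgIcc x).1]
  · rintro ⟨Q, hQ, rfl⟩
    have hQP : (Q : Measure (Fin d → ℝ)) ≪ (P : Measure (Fin d → ℝ)) := by
      refine Measure.AbsolutelyContinuous.mk fun s hs hs0 => ?_
      have := hQ s hs
      rw [hs0, mul_zero] at this
      exact le_antisymm this zero_le
    set f := (Q : Measure (Fin d → ℝ)).rnDeriv (P : Measure (Fin d → ℝ)) with hf
    have hfmeas : Measurable f := Measure.measurable_rnDeriv _ _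
    set c : ℝ≥0 := ⟨α⁻¹, hαinv⟩ with hc
    have hc0 : c ≠ 0 := by
      have h : (c : ℝ) ≠ 0 := by show α⁻¹ ≠ 0; positivity
      exact fun hzero => h (by rw [hzero]; simp)
    have hcoe : (c : ℝ≥0∞) = ENNReal.ofReal α⁻¹ := by
      rw [ENNReal.ofReal, Real.toNNReal_of_nonneg hαinv]
      rfl
    have hle : (Q : Measure (Fin d → ℝ)) ≤ c • (P : Measure (Fin d → ℝ)) := by
      refine Measure.le_iff.2 fun s hs => ?_
      rw [Measure.smul_apply, ENNReal.smul_def, smul_eq_mul, hcoe]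
      exact hQ s hs
    -- bound on the RN derivative
    have hbound : f ≤ᵐ[(P : Measure (Fin d → ℝ))] fun _ => (c : ℝ≥0∞) := by
      have h1 : (Q : Measure (Fin d → ℝ)).rnDeriv (c • (P : Measure (Fin d → ℝ)))
          ≤ᵐ[c • (P : Measure (Fin d → ℝ))] 1 := Measure.rnDeriv_le_one_of_le hle
      have h1' : (Q : Measure (Fin d → ℝ)).rnDeriv (c • (P : Measure (Fin d → ℝ)))
          ≤ᵐ[(P : Measure (Fin d → ℝ))] 1 := by
        have habs : (P : Measure (Fin d → ℝ)) ≪ c • (P : Measure (Fin d → ℝ)) :=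
          Measure.absolutelyContinuous_smul (by simpa using hc0)
        exact habs.ae_le h1
      have h2 := Measure.rnDeriv_smul_right' (Q : Measure (Fin d → ℝ))
        (P : Measure (Fin d → ℝ)) hc0
      filter_upwards [h1', h2] with x hx1 hx2
      rw [hx2] at hx1
      simp only [Pi.smul_apply, Pi.one_apply] at hx1
      rw [ENNReal.smul_def, smul_eq_mul, ENNReal.coe_inv hc0] at hx1
      calc f x = (c : ℝ≥0∞) * ((c : ℝ≥0∞)⁻¹ * f x) := by
            rw [← mul_assoc, ENNReal.mul_inv_cancel (by simpa using hc0) ENNReal.coe_ne_top,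
              one_mul]
        _ ≤ (c : ℝ≥0∞) * 1 := by gcongr
        _ = c := mul_one _
    set g : (Fin d → ℝ) → ℝ := fun x => min (f x).toReal α⁻¹ with hg
    have hgmeas : Measurable g := (hfmeas.ennreal_toReal).min measurable_const
    have hgf : g =ᵐ[(P : Measure (Fin d → ℝ))] fun x => (f x).toReal := by
      filter_upwards [hbound] with x hx
      have : (f x).toReal ≤ α⁻¹ := by
        have := ENNReal.toReal_mono ENNReal.coe_ne_top hx
        rw [ENNReal.coe_toReal] at this
        exact this
      simp [hg, min_eq_left this]
    refine ⟨g, hgmeas, fun x => ⟨le_min ENNReal.toReal_nonneg hαinv, min_le_right _ _⟩, ?_, ?_⟩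
    · rw [integral_congr_ae hgf, Measure.integral_toReal_rnDeriv hQP]
      simp
    · -- barycentre equality
      have hwd : (P : Measure (Fin d → ℝ)).withDensity f = (Q : Measure (Fin d → ℝ)) :=
        haveI : (Q : Measure (Fin d → ℝ)).HaveLebesgueDecomposition (P : Measure (Fin d → ℝ)) :=
          Measure.haveLebesgueDecomposition_of_sigmaFinite _ _
        Measure.withDensity_rnDeriv_eq _ _ hQP
      have hwd' : (P : Measure (Fin d → ℝ)).withDensity
          (fun x => ((f x).toNNReal : ℝ≥0∞)) = (Q : Measure (Fin d → ℝ)) := by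
        rw [← hwd]
        refine withDensity_congr_ae ?_
        filter_upwards [hbound] with x hx
        rw [ENNReal.coe_toNNReal (lt_of_le_of_lt hx ENNReal.coe_lt_top).ne]
      rw [← hwd', integral_withDensity_eq_integral_smul hfmeas.ennreal_toNNReal]
      refine integral_congr_ae ?_
      filter_upwards [hgf] with x hx
      rw [hx]
      simp [NNReal.smul_def, ENNReal.toReal]
end
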